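/- Let G be a reduced finite graph consisting of an odd cycle attached at the vertex A to a tree, and for each x ≥ 1 let S_x denote the set of vertices of the tree at distance x from A. Suppose G has a telescoping vertex v ∈ S_d for some d ≥ 1. Then: (i) the degree of A is at most 4, and deg A = 3 if and only if d = 1; (ii) the cardinalities |S₁|, |S₂|, …, |S_{d−1}| are all even and |S_d| is odd; (iii) the sum of the degrees of the vertices in S_d \ {v} is even. -/

import Mathlib

noncomputable section
open scoped Classical

/-- A finite multigraph with vertices and edge labels drawn from `ℕ`;
loops and multiple edges are allowed.  `ends e` is the unordered pair of
endpoints of the edge labelled `e`. -/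
structure MGraph where
  verts : Finset ℕ
  edges : Finset ℕ
  ends : ℕ → Sym2 ℕ

namespace MGraph

/-- Well-formedness: every edge joins vertices of the graph. -/
def WF (G : MGraph) : Prop := ∀ e ∈ G.edges, ∀ v ∈ G.ends e, v ∈ G.verts

/-- Delete the edge labelled `e`. -/
def delEdge (G : MGraph) (e : ℕ) : MGraph := ⟨G.verts, G.edges.erase e, G.ends⟩

/-- Delete the vertex `v` together with all incident edges. -/
def delVert (G : MGraph) (v : ℕ) : MGraph :=
  ⟨G.verts.erase v, G.edges.filter (fun e => ¬ v ∈ G.ends e), G.ends⟩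

def size (G : MGraph) : ℕ := G.verts.card + G.edges.card

/-- Minimal excludant of a finite set of naturals. -/
def mex (s : Finset ℕ) : ℕ := sInf {n : ℕ | n ∉ s}

/-- Grundy-value computation with fuel; every move strictly decreases `size`,
so fuel `size G` computes the true Sprague–Grundy value of `G`. -/
def nimAux : ℕ → MGraph → ℕ
  | 0, _ => 0
  | fuel + 1, G =>
      mex ((G.verts.image fun v => nimAux fuel (G.delVert v)) ∪
           (G.edges.image fun e => nimAux fuel (G.delEdge e)))

/-- The nim-value (Sprague–Grundy value) of the vertex-and-edge deletion game on
`G` : `ν(∅) = 0` and `ν(G) = mex {ν(H) : H is obtained from G by a single move}`,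
where a move deletes one edge, or one vertex with all incident edges. -/
def nim (G : MGraph) : ℕ := nimAux G.size G

/-- The parity function `φ(G) = (|V| mod 2) + 2 (|E| mod 2)`. -/
def phi (G : MGraph) : ℕ := G.verts.card % 2 + 2 * (G.edges.card % 2)

/-- `u` and `v` are joined by an edge. -/
def Adj (G : MGraph) (u v : ℕ) : Prop := ∃ e ∈ G.edges, G.ends e = Sym2.mk u v

def Reach (G : MGraph) (u v : ℕ) : Prop := Relation.ReflTransGen G.Adj u v

def Connected (G : MGraph) : Prop :=
  G.verts.Nonempty ∧ ∀ u ∈ G.verts, ∀ v ∈ G.verts, G.Reach u v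

/-- A (finite) tree: a connected well-formed graph with `|E| + 1 = |V|`
(this forces the absence of loops, multiple edges and cycles). -/
def IsTree (G : MGraph) : Prop := G.WF ∧ G.Connected ∧ G.edges.card + 1 = G.verts.card

/-- `G` is a cycle graph of length `n ≥ 2`. -/
def IsCycle (G : MGraph) (n : ℕ) : Prop :=
  2 ≤ n ∧ ∃ f g : ℕ → ℕ,
    Set.InjOn f (Set.Iio n) ∧ Set.InjOn g (Set.Iio n) ∧
    G.verts = (Finset.range n).image f ∧
    G.edges = (Finset.range n).image g ∧
    ∀ i < n, G.ends (g i) = Sym2.mk (f i) (f ((i + 1) % n))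

/-- `G` is a cycle of odd length (hence of length at least 3). -/
def IsOddCycle (G : MGraph) : Prop := ∃ n, Odd n ∧ G.IsCycle n

/-- Induced subgraph on a set of vertices. -/
def induce (G : MGraph) (S : Finset ℕ) : MGraph :=
  ⟨S, G.edges.filter (fun e => ∀ v ∈ G.ends e, v ∈ S), G.ends⟩

/-- The connected component of `v` in `G`. -/
def component (G : MGraph) (v : ℕ) : MGraph :=
  G.induce (G.verts.filter fun u => G.Reach v u)

/-- Two `MGraph`s are the same graph (same vertices, edges and incidence). -/
def SameGraph (G H : MGraph) : Prop :=
  G.verts = H.verts ∧ G.edges = H.edges ∧ ∀ e ∈ G.edges, G.ends e = H.ends e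

/-- An isomorphism of multigraphs. -/
structure Iso (G H : MGraph) where
  vmap : ℕ → ℕ
  emap : ℕ → ℕ
  vmap_bij : Set.BijOn vmap (G.verts : Set ℕ) (H.verts : Set ℕ)
  emap_bij : Set.BijOn emap (G.edges : Set ℕ) (H.edges : Set ℕ)
  ends_eq : ∀ e ∈ G.edges, H.ends (emap e) = (G.ends e).map vmap

/-- The data witnessing a cancellation at the vertex `s` : `G` is the disjoint
union of a graph `G'` containing `s` and two isomorphic graphs, with vertex
sets `B` and `C`, together with two edges `e₁`, `e₂` joining `s` to
corresponding vertices `v₁ ∈ B`, `v₂ ∈ C`. -/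
def Cancellation (G : MGraph) (s : ℕ) (B C : Finset ℕ) : Prop :=
  ∃ e₁ e₂ v₁ v₂ : ℕ,
    s ∈ G.verts ∧ s ∉ B ∧ s ∉ C ∧ Disjoint B C ∧
    B ⊆ G.verts ∧ C ⊆ G.verts ∧ v₁ ∈ B ∧ v₂ ∈ C ∧
    e₁ ∈ G.edges ∧ e₂ ∈ G.edges ∧ e₁ ≠ e₂ ∧
    G.ends e₁ = Sym2.mk s v₁ ∧ G.ends e₂ = Sym2.mk s v₂ ∧
    (∀ e ∈ G.edges, e = e₁ ∨ e = e₂ ∨ (∀ v ∈ G.ends e, v ∈ B) ∨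
      (∀ v ∈ G.ends e, v ∈ C) ∨ (∀ v ∈ G.ends e, v ∈ G.verts \ (B ∪ C))) ∧
    ∃ φ : Iso (G.induce B) (G.induce C), φ.vmap v₁ = v₂

def HasCancellationAt (G : MGraph) (s : ℕ) : Prop := ∃ B C, G.Cancellation s B C

/-- A graph is reduced if no cancellation is possible. -/
def Reduced (G : MGraph) : Prop := ∀ s, ¬ G.HasCancellationAt s

/-- Performing one cancellation. -/
def CancelStep (G G' : MGraph) : Prop :=
  ∃ s B C, G.Cancellation s B C ∧ G' = G.induce (G.verts \ (B ∪ C))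

/-- `G` reduces to `H` by a (possibly empty) sequence of cancellations. -/
def ReducesTo (G H : MGraph) : Prop := Relation.ReflTransGen CancelStep G H

/-- `G` consists of the odd cycle `C` attached to the tree `T` at the single
vertex `A`. -/
def CycleWithTreeAt (G C T : MGraph) (A : ℕ) : Prop :=
  C.IsOddCycle ∧ T.IsTree ∧
  C.verts ∩ T.verts = {A} ∧
  Disjoint C.edges T.edges ∧
  G.verts = C.verts ∪ T.verts ∧
  G.edges = C.edges ∪ T.edges ∧
  (∀ e ∈ C.edges, G.ends e = C.ends e) ∧
  (∀ e ∈ T.edges, G.ends e = T.ends e)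

/-- For a graph `G` containing the odd cycle `C` attached to the rest of the
graph at the vertex `A` : the vertex `v` (outside the cycle) is telescoping if,
after deleting `v`, the connected component of `A` reduces by repeatedly
performing cancellations to exactly the cycle `C`. -/
def Telescoping (G C : MGraph) (A v : ℕ) : Prop :=
  v ∈ G.verts ∧ v ∉ C.verts ∧
  ∃ H, ReducesTo ((G.delVert v).component A) H ∧ H.SameGraph C

/-- The degree of the vertex `v`; a loop contributes `2`. -/
def degree (G : MGraph) (v : ℕ) : ℕ :=
  ∑ e ∈ G.edges,
    (if G.ends e = Sym2.mk v v then 2 else if v ∈ G.ends e then 1 else 0)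

def NoLoops (G : MGraph) : Prop := ∀ e ∈ G.edges, ¬ (G.ends e).IsDiag

def IsSubgraph (H G : MGraph) : Prop :=
  H.verts ⊆ G.verts ∧ H.edges ⊆ G.edges ∧ ∀ e ∈ H.edges, H.ends e = G.ends e

/-- `G` contains the odd cycle `C` and no other cycles (of length ≥ 2). -/
def UniqueOddCycle (G C : MGraph) : Prop :=
  C.IsSubgraph G ∧ C.IsOddCycle ∧
  ∀ (C' : MGraph) (n : ℕ), C'.IsSubgraph G → C'.IsCycle n → C'.SameGraph C

/-- `G` is bipartite (two-colourable); in particular it has no loops. -/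
def Bipartite (G : MGraph) : Prop :=
  ∃ c : ℕ → Bool, ∀ e ∈ G.edges, ∀ u v : ℕ, G.ends e = Sym2.mk u v → c u ≠ c v

/-- `G` is a path of length `z` (i.e. with `z` edges) from `P` to `Q`. -/
def IsPath (G : MGraph) (P Q z : ℕ) : Prop :=
  ∃ f g : ℕ → ℕ,
    Set.InjOn f (Set.Iio (z + 1)) ∧ Set.InjOn g (Set.Iio z) ∧
    f 0 = P ∧ f z = Q ∧
    G.verts = (Finset.range (z + 1)).image f ∧
    G.edges = (Finset.range z).image g ∧
    ∀ i < z, G.ends (g i) = Sym2.mk (f i) (f (i + 1))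

/-- There is a walk of length `n` from `u` to `v` in `G`. -/
def WalkLen (G : MGraph) (u v n : ℕ) : Prop :=
  ∃ f : ℕ → ℕ, f 0 = u ∧ f n = v ∧ ∀ i < n, G.Adj (f i) (f (i + 1))

/-- Graph distance between two vertices. -/
def edist (G : MGraph) (u v : ℕ) : ℕ := sInf {n | G.WalkLen u v n}

end MGraph

namespace MGraph


open Finset

lemma mgraph_ext {G H : MGraph} (h1 : G.verts = H.verts) (h2 : G.edges = H.edges)
    (h3 : G.ends = H.ends) : G = H := by
  cases G; cases H; simp_all

lemma induce_verts (G : MGraph) (S : Finset ℕ) : (G.induce S).verts = S := rfl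
lemma induce_ends (G : MGraph) (S : Finset ℕ) : (G.induce S).ends = G.ends := rfl
lemma induce_edges (G : MGraph) (S : Finset ℕ) :
    (G.induce S).edges = G.edges.filter (fun e => ∀ x ∈ G.ends e, x ∈ S) := rfl

lemma mem_induce_edges {G : MGraph} {S : Finset ℕ} {e : ℕ} :
    e ∈ (G.induce S).edges ↔ e ∈ G.edges ∧ ∀ x ∈ G.ends e, x ∈ S := by
  rw [induce_edges, Finset.mem_filter]

lemma induce_induce (G : MGraph) (S S' : Finset ℕ) (h : S' ⊆ S) :
    (G.induce S).induce S' = G.induce S' := by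
  refine mgraph_ext rfl ?_ rfl
  rw [induce_edges, induce_edges (G := G), induce_edges, Finset.filter_filter]
  apply Finset.filter_congr
  intro e _
  show (_ ∧ (∀ x ∈ (G.induce S).ends e, x ∈ S')) ↔ _
  rw [induce_ends]
  constructor
  · rintro ⟨_, h2⟩; exact h2
  · intro h2; exact ⟨fun x hx => h (h2 x hx), h2⟩

lemma Adj.symm {G : MGraph} {u v : ℕ} (h : G.Adj u v) : G.Adj v u := by
  obtain ⟨e, he, hend⟩ := h
  exact ⟨e, he, by rw [hend]; exact Sym2.eq_swap⟩

lemma walkLen_zero (G : MGraph) (u : ℕ) : G.WalkLen u u 0 :=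
  ⟨fun _ => u, rfl, rfl, fun i hi => absurd hi (by omega)⟩

lemma WalkLen.concat {G : MGraph} {u w x n} (h : G.WalkLen u w n) (h2 : G.Adj w x) :
    G.WalkLen u x (n + 1) := by
  obtain ⟨f, h0, hn, hs⟩ := h
  refine ⟨fun i => if i = n + 1 then x else f i, ?_, ?_, ?_⟩
  · dsimp only; rw [if_neg (by omega)]; exact h0
  · dsimp only; rw [if_pos rfl]
  · intro i hi
    dsimp only
    rcases Nat.lt_or_ge i n with hlt | hge
    · rw [if_neg (by omega), if_neg (by omega)]
      exact hs i hlt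
    · have : i = n := by omega
      subst this
      rw [if_neg (by omega), if_pos rfl, hn]
      exact h2

lemma WalkLen.cons {G : MGraph} {u y w n} (h2 : G.Adj u y) (h : G.WalkLen y w n) :
    G.WalkLen u w (n + 1) := by
  obtain ⟨f, h0, hn, hs⟩ := h
  refine ⟨fun i => if i = 0 then u else f (i - 1), ?_, ?_, ?_⟩
  · dsimp only; rw [if_pos rfl]
  · dsimp only; rw [if_neg (by omega)]; simpa using hn
  · intro i hi
    dsimp only
    rcases Nat.eq_zero_or_pos i with rfl | hpos
    · rw [if_pos rfl, if_neg (by omega)]; simpa [h0] using h2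
    · rw [if_neg (by omega), if_neg (by omega)]
      have h1 : i - 1 + 1 = i + 1 - 1 := by omega
      rw [← h1]
      exact hs (i - 1) (by omega)

lemma WalkLen.trans {G : MGraph} {u w x m n} (h1 : G.WalkLen u w m) (h2 : G.WalkLen w x n) :
    G.WalkLen u x (m + n) := by
  induction n generalizing x with
  | zero =>
    obtain ⟨f, h0, hn, _⟩ := h2
    have : w = x := by rw [← h0, hn]
    subst this
    exact h1
  | succ n ih =>
    obtain ⟨f, h0, hn, hs⟩ := h2
    have hw : G.WalkLen w (f n) n := ⟨f, h0, rfl, fun i hi => hs i (by omega)⟩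
    have hadj : G.Adj (f n) x := by rw [← hn]; exact hs n (by omega)
    exact (ih hw).concat hadj

lemma reach_iff_walk {G : MGraph} {u w : ℕ} : G.Reach u w ↔ ∃ n, G.WalkLen u w n := by
  constructor
  · intro h
    induction h with
    | refl => exact ⟨0, walkLen_zero G u⟩
    | tail _ hadj ih =>
      obtain ⟨n, hw⟩ := ih
      exact ⟨n + 1, hw.concat hadj⟩
  · rintro ⟨n, hw⟩
    induction n generalizing w with
    | zero =>
      obtain ⟨f, h0, hn, _⟩ := hw
      have : u = w := by rw [← h0, hn]
      subst this
      exact Relation.ReflTransGen.refl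
    | succ n ih =>
      obtain ⟨f, h0, hn, hs⟩ := hw
      have hw' : G.WalkLen u (f n) n := ⟨f, h0, rfl, fun i hi => hs i (by omega)⟩
      have hadj : G.Adj (f n) w := by rw [← hn]; exact hs n (by omega)
      exact Relation.ReflTransGen.tail (ih hw') hadj

lemma edist_le {G : MGraph} {u w n : ℕ} (h : G.WalkLen u w n) : G.edist u w ≤ n :=
  Nat.sInf_le h

lemma walkLen_edist {G : MGraph} {u w : ℕ} (h : G.Reach u w) :
    G.WalkLen u w (G.edist u w) := by
  rw [reach_iff_walk] at h
  exact Nat.sInf_mem h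

lemma edist_self (G : MGraph) (u : ℕ) : G.edist u u = 0 :=
  Nat.le_zero.mp (edist_le (walkLen_zero G u))

lemma eq_of_edist_eq_zero {G : MGraph} {u w : ℕ} (h : G.Reach u w) (h0 : G.edist u w = 0) :
    u = w := by
  have hw := walkLen_edist h
  rw [h0] at hw
  obtain ⟨f, hf0, hfn, _⟩ := hw
  rw [← hf0, hfn]

-- Iso lemmas
lemma Iso.adj_map {G H : MGraph} (φ : Iso G H) {x y : ℕ} (h : G.Adj x y) :
    H.Adj (φ.vmap x) (φ.vmap y) := by
  obtain ⟨e, he, hend⟩ := h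
  refine ⟨φ.emap e, φ.emap_bij.mapsTo he, ?_⟩
  rw [φ.ends_eq e he, hend]
  rfl

lemma Iso.walk_map {G H : MGraph} (φ : Iso G H) {u w n : ℕ} (h : G.WalkLen u w n) :
    H.WalkLen (φ.vmap u) (φ.vmap w) n := by
  obtain ⟨f, h0, hn, hs⟩ := h
  subst h0 hn
  exact ⟨fun i => φ.vmap (f i), rfl, rfl, fun i hi => φ.adj_map (hs i hi)⟩

/-- inverse iso (needs well-formedness so ends stay in the vertex set) -/
def Iso.symm {G H : MGraph} (hWF : ∀ e ∈ G.edges, ∀ x ∈ G.ends e, x ∈ G.verts)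
    (φ : Iso G H) : Iso H G where
  vmap := Function.invFunOn φ.vmap (G.verts : Set ℕ)
  emap := Function.invFunOn φ.emap (G.edges : Set ℕ)
  vmap_bij := Set.BijOn.symm
    ⟨φ.vmap_bij.surjOn.rightInvOn_invFunOn, φ.vmap_bij.injOn.leftInvOn_invFunOn⟩
    φ.vmap_bij
  emap_bij := Set.BijOn.symm
    ⟨φ.emap_bij.surjOn.rightInvOn_invFunOn, φ.emap_bij.injOn.leftInvOn_invFunOn⟩
    φ.emap_bij
  ends_eq := by
    intro e' he'
    set g := Function.invFunOn φ.emap (G.edges : Set ℕ) with hgdef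
    have hbij := Set.BijOn.symm
      ⟨φ.emap_bij.surjOn.rightInvOn_invFunOn, φ.emap_bij.injOn.leftInvOn_invFunOn⟩
      φ.emap_bij
    have hee : g e' ∈ G.edges := hbij.mapsTo he'
    have hme : φ.emap (g e') = e' := φ.emap_bij.surjOn.rightInvOn_invFunOn he'
    have h1 : H.ends e' = (G.ends (g e')).map φ.vmap := by
      have := φ.ends_eq _ hee
      rw [hme] at this
      exact this
    rw [h1, Sym2.map_map]
    have : ∀ x ∈ (G.ends (g e')), (Function.invFunOn φ.vmap (G.verts : Set ℕ) ∘ φ.vmap) x = id x := by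
      intro x hx
      exact φ.vmap_bij.injOn.leftInvOn_invFunOn (hWF _ hee x hx)
    rw [Sym2.map_congr this, Sym2.map_id]
    rfl

@[simp] lemma vmap_symm_vmap {G H : MGraph} (hWF : ∀ e ∈ G.edges, ∀ x ∈ G.ends e, x ∈ G.verts)
    (φ : Iso G H) {x : ℕ} (hx : x ∈ G.verts) : (φ.symm hWF).vmap (φ.vmap x) = x :=
  φ.vmap_bij.injOn.leftInvOn_invFunOn hx


open Finset

section Tree

variable (T : MGraph) (A : ℕ)

/-- `e` is the "down-edge" of `u`, with `p` the parent. -/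
def DownE (u e p : ℕ) : Prop :=
  e ∈ T.edges ∧ p ∈ T.verts ∧ T.ends e = Sym2.mk p u ∧ T.edist A p + 1 = T.edist A u

def dEP (u : ℕ) : ℕ × ℕ :=
  if h : ∃ ep : ℕ × ℕ, DownE T A u ep.1 ep.2 then h.choose else (0, 0)

def dE (u : ℕ) : ℕ := (dEP T A u).1
def par (u : ℕ) : ℕ := (dEP T A u).2

variable {T A}
variable (hT : T.IsTree) (hA : A ∈ T.verts)
include hT hA
set_option linter.unusedSectionVars false

lemma tree_reach {u : ℕ} (hu : u ∈ T.verts) : T.Reach A u := hT.2.1.2 A hA u hu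

omit hA in
lemma tree_wf : T.WF := hT.1

lemma dep_eq_zero_iff {u : ℕ} (hu : u ∈ T.verts) : T.edist A u = 0 ↔ u = A := by
  constructor
  · intro h; exact (eq_of_edist_eq_zero (tree_reach hT hA hu) h).symm
  · rintro rfl; exact edist_self T _

lemma dep_le_adj {u w : ℕ} (hu : u ∈ T.verts) (h : T.Adj u w) :
    T.edist A w ≤ T.edist A u + 1 :=
  edist_le ((walkLen_edist (tree_reach hT hA hu)).concat h)

omit hA in
lemma adj_mem_left {u w : ℕ} (h : T.Adj u w) : u ∈ T.verts := by
  obtain ⟨e, he, hend⟩ := h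
  exact tree_wf hT e he u (by rw [hend]; exact Sym2.mem_mk_left u w)

omit hA in
lemma adj_mem_right {u w : ℕ} (h : T.Adj u w) : w ∈ T.verts :=
  adj_mem_left hT h.symm

lemma downE_exists {u : ℕ} (hu : u ∈ T.verts) (hne : u ≠ A) :
    ∃ ep : ℕ × ℕ, DownE T A u ep.1 ep.2 := by
  have hreach := tree_reach hT hA hu
  set n := T.edist A u with hn
  have hnpos : 1 ≤ n := by
    have hne0 : n ≠ 0 := fun h0 => hne ((dep_eq_zero_iff hT hA hu).mp h0)
    omega
  obtain ⟨f, h0, hfn, hs⟩ := walkLen_edist hreach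
  set p := f (n - 1) with hp
  have hwp : T.WalkLen A p (n - 1) := ⟨f, h0, rfl, fun i hi => hs i (by omega)⟩
  have hadj : T.Adj p u := by
    have := hs (n - 1) (by omega)
    rw [show n - 1 + 1 = n by omega, hfn] at this
    exact this
  have hpv : p ∈ T.verts := adj_mem_left hT hadj
  have hdp_le : T.edist A p ≤ n - 1 := edist_le hwp
  have hdp_ge : n ≤ T.edist A p + 1 := by
    have := dep_le_adj hT hA hpv hadj
    omega
  obtain ⟨e, he, hend⟩ := hadj
  refine ⟨(e, p), he, hpv, hend, ?_⟩
  dsimp only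
  omega

lemma dEP_spec {u : ℕ} (hu : u ∈ T.verts) (hne : u ≠ A) :
    DownE T A u (dE T A u) (par T A u) := by
  rw [dE, par, dEP, dif_pos (downE_exists hT hA hu hne)]
  exact (downE_exists hT hA hu hne).choose_spec

lemma dE_mem {u : ℕ} (hu : u ∈ T.verts) (hne : u ≠ A) : dE T A u ∈ T.edges :=
  (dEP_spec hT hA hu hne).1

lemma par_mem {u : ℕ} (hu : u ∈ T.verts) (hne : u ≠ A) : par T A u ∈ T.verts :=
  (dEP_spec hT hA hu hne).2.1

lemma dE_ends {u : ℕ} (hu : u ∈ T.verts) (hne : u ≠ A) :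
    T.ends (dE T A u) = Sym2.mk (par T A u) u :=
  (dEP_spec hT hA hu hne).2.2.1

lemma dep_par {u : ℕ} (hu : u ∈ T.verts) (hne : u ≠ A) :
    T.edist A (par T A u) + 1 = T.edist A u :=
  (dEP_spec hT hA hu hne).2.2.2

lemma par_adj {u : ℕ} (hu : u ∈ T.verts) (hne : u ≠ A) : T.Adj (par T A u) u :=
  ⟨dE T A u, dE_mem hT hA hu hne, dE_ends hT hA hu hne⟩

lemma dE_inj : Set.InjOn (dE T A) ((T.verts.erase A : Finset ℕ) : Set ℕ) := by
  intro u hu u' hu' heq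
  simp only [Finset.coe_erase, Set.mem_diff, Finset.mem_coe, Set.mem_singleton_iff] at hu hu'
  have hend : Sym2.mk (par T A u) u = Sym2.mk (par T A u') u' := by
    rw [← dE_ends hT hA hu.1 hu.2, ← dE_ends hT hA hu'.1 hu'.2, heq]
  rw [Sym2.eq_iff] at hend
  rcases hend with ⟨h1, h2⟩ | ⟨h1, h2⟩
  · exact h2
  · -- par u = u' and u = par u'
    have d1 := dep_par hT hA hu.1 hu.2
    have d2 := dep_par hT hA hu'.1 hu'.2
    rw [h1] at d1
    rw [← h2] at d2
    omega

lemma dE_image : (T.verts.erase A).image (dE T A) = T.edges := by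
  apply Finset.eq_of_subset_of_card_le
  · intro e he
    rw [Finset.mem_image] at he
    obtain ⟨u, hu, rfl⟩ := he
    rw [Finset.mem_erase] at hu
    exact dE_mem hT hA hu.2 hu.1
  · rw [Finset.card_image_of_injOn (dE_inj hT hA), Finset.card_erase_of_mem hA]
    have := hT.2.2
    omega

/-- Every tree edge is the down-edge of a unique non-root vertex. -/
lemma edge_structure {e : ℕ} (he : e ∈ T.edges) :
    ∃ u ∈ T.verts.erase A, e = dE T A u := by
  rw [← dE_image hT hA] at he
  rw [Finset.mem_image] at he
  obtain ⟨u, hu, rfl⟩ := he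
  exact ⟨u, hu, rfl⟩

/-- Edge representation: if `ends e = s(p, u)` with `dep p < dep u` then `e = dE u`, `p = par u`. -/
lemma edge_rep {e p u : ℕ} (he : e ∈ T.edges) (hend : T.ends e = Sym2.mk p u)
    (hdep : T.edist A p < T.edist A u) :
    u ∈ T.verts ∧ u ≠ A ∧ e = dE T A u ∧ p = par T A u := by
  obtain ⟨w, hw, rfl⟩ := edge_structure hT hA he
  rw [Finset.mem_erase] at hw
  have hend2 := dE_ends hT hA hw.2 hw.1
  rw [hend2] at hend
  rw [Sym2.eq_iff] at hend
  have hdw := dep_par hT hA hw.2 hw.1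
  rcases hend with ⟨h1, h2⟩ | ⟨h1, h2⟩
  · -- par w = p, w = u
    subst h2
    exact ⟨hw.2, hw.1, rfl, h1.symm⟩
  · -- par w = u, w = p
    subst h1 h2
    omega

lemma no_loops_tree {e : ℕ} (he : e ∈ T.edges) : ¬ (T.ends e).IsDiag := by
  obtain ⟨w, hw, rfl⟩ := edge_structure hT hA he
  rw [Finset.mem_erase] at hw
  rw [dE_ends hT hA hw.2 hw.1, Sym2.mk_isDiag_iff]
  intro h
  have := dep_par hT hA hw.2 hw.1
  rw [h] at this
  omega

lemma edge_cases {e p u : ℕ} (he : e ∈ T.edges) (hend : T.ends e = Sym2.mk p u) :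
    (u ∈ T.verts ∧ u ≠ A ∧ e = dE T A u ∧ p = par T A u) ∨
    (p ∈ T.verts ∧ p ≠ A ∧ e = dE T A p ∧ u = par T A p) := by
  obtain ⟨w, hw, hew⟩ := edge_structure hT hA he
  rw [Finset.mem_erase] at hw
  have hdw := dep_par hT hA hw.2 hw.1
  have hend2 := dE_ends hT hA hw.2 hw.1
  rw [hew, hend2, Sym2.eq_iff] at hend
  rcases hend with ⟨h1, h2⟩ | ⟨h1, h2⟩
  · left
    refine edge_rep hT hA he ?_ ?_
    · rw [hew, hend2, h1, h2]
    · rw [← h1, ← h2]; omega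
  · right
    refine edge_rep hT hA he ?_ ?_
    · rw [hew, hend2, h1, h2, Sym2.eq_swap]
    · rw [← h1, ← h2]; omega

/-- at most one edge between any pair of vertices -/
lemma edge_unique {e e' : ℕ} (he : e ∈ T.edges) (he' : e' ∈ T.edges)
    (h : T.ends e = T.ends e') : e = e' := by
  obtain ⟨w, hw, rfl⟩ := edge_structure hT hA he
  rw [Finset.mem_erase] at hw
  have hend := dE_ends hT hA hw.2 hw.1
  rcases edge_cases hT hA he' (by rw [← h, hend]) with ⟨_, _, h3, _⟩ | ⟨hp1, hp2, h3, h4⟩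
  · exact h3.symm
  · have hd := dep_par hT hA hw.2 hw.1
    have hd' := dep_par hT hA hp1 hp2
    rw [← h4] at hd'
    omega

lemma par_unique {p u : ℕ} (hadj : T.Adj p u) (hdep : T.edist A p + 1 = T.edist A u) :
    p = par T A u := by
  obtain ⟨e, he, hend⟩ := hadj
  exact (edge_rep hT hA he hend (by omega)).2.2.2

end Tree

open Finset

section Tree2

variable (T : MGraph) (A : ℕ)

def children (u : ℕ) : Finset ℕ := (T.verts.erase A).filter (fun c => par T A c = u)

/-- `u` lies in the subtree rooted at `r` (i.e. `r` is an ancestor-or-equal of `u`). -/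
def inSub (r u : ℕ) : Prop :=
  u ∈ T.verts ∧ ∃ k, (par T A)^[k] u = r ∧ T.edist A u = T.edist A r + k

variable {T A}
variable (hT : T.IsTree) (hA : A ∈ T.verts)
include hT hA
set_option linter.unusedSectionVars false

lemma mem_children {c u : ℕ} : c ∈ children T A u ↔ (c ≠ A ∧ c ∈ T.verts ∧ par T A c = u) := by
  rw [children, Finset.mem_filter, Finset.mem_erase]
  tauto

lemma par_ne_self {u : ℕ} (hu : u ∈ T.verts) (hne : u ≠ A) : par T A u ≠ u := by
  intro h
  have := dep_par hT hA hu hne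
  rw [h] at this
  omega

lemma degree_eq_card {u : ℕ} :
    T.degree u = (T.edges.filter (fun e => u ∈ T.ends e)).card := by
  rw [degree]
  rw [Finset.card_filter]
  apply Finset.sum_congr rfl
  intro e he
  have hnl := no_loops_tree hT hA he
  rw [if_neg]
  · intro h
    apply hnl
    rw [h]
    exact Sym2.mk_isDiag_iff.mpr rfl

lemma tree_edges_at (u : ℕ) :
    T.edges.filter (fun e => u ∈ T.ends e)
      = ((T.verts.erase A).filter (fun w => w = u ∨ par T A w = u)).image (dE T A) := by
  ext e
  rw [Finset.mem_filter, Finset.mem_image]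
  constructor
  · rintro ⟨he, hu⟩
    obtain ⟨w, hw, rfl⟩ := edge_structure hT hA he
    rw [Finset.mem_erase] at hw
    refine ⟨w, ?_, rfl⟩
    rw [Finset.mem_filter, Finset.mem_erase]
    refine ⟨⟨hw.1, hw.2⟩, ?_⟩
    rw [dE_ends hT hA hw.2 hw.1, Sym2.mem_iff] at hu
    tauto
  · rintro ⟨w, hw, rfl⟩
    rw [Finset.mem_filter, Finset.mem_erase] at hw
    refine ⟨dE_mem hT hA hw.1.2 hw.1.1, ?_⟩
    rw [dE_ends hT hA hw.1.2 hw.1.1, Sym2.mem_iff]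
    tauto

lemma degree_tree_root : T.degree A = (children T A A).card := by
  rw [degree_eq_card hT hA, tree_edges_at hT hA]
  rw [Finset.card_image_of_injOn ((dE_inj hT hA).mono (by
    intro x hx
    simp only [Finset.coe_filter, Set.mem_setOf_eq] at hx
    exact hx.1))]
  congr 1
  apply Finset.filter_congr
  intro w hw
  rw [Finset.mem_erase] at hw
  constructor
  · rintro (rfl | h)
    · exact absurd rfl hw.1
    · exact h
  · intro h; right; exact h

lemma degree_tree_nonroot {u : ℕ} (hu : u ∈ T.verts) (hne : u ≠ A) :
    T.degree u = 1 + (children T A u).card := by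
  rw [degree_eq_card hT hA, tree_edges_at hT hA]
  rw [Finset.card_image_of_injOn ((dE_inj hT hA).mono (by
    intro x hx
    simp only [Finset.coe_filter, Set.mem_setOf_eq] at hx
    exact hx.1))]
  rw [Finset.filter_or, Finset.card_union_of_disjoint, Finset.filter_eq']
  · rw [if_pos (Finset.mem_erase.mpr ⟨hne, hu⟩)]
    rfl
  · rw [Finset.disjoint_filter]
    rintro x _ rfl
    exact par_ne_self hT hA hu hne

-- inSub lemmas
lemma inSub_refl {u : ℕ} (hu : u ∈ T.verts) : inSub T A u u := ⟨hu, 0, rfl, by omega⟩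

lemma inSub_dep_le {r u : ℕ} (h : inSub T A r u) : T.edist A r ≤ T.edist A u := by
  obtain ⟨_, k, _, hd⟩ := h
  omega

lemma inSub_eq_of_dep {r u : ℕ} (h : inSub T A r u) (hd : T.edist A u = T.edist A r) :
    u = r := by
  obtain ⟨_, k, hk, hdd⟩ := h
  have : k = 0 := by omega
  rw [this] at hk
  exact hk

lemma inSub_of_par {u : ℕ} (hu : u ∈ T.verts) (hne : u ≠ A) : inSub T A (par T A u) u :=
  ⟨hu, 1, rfl, by have := dep_par hT hA hu hne; omega⟩

lemma inSub_trans {r m u : ℕ} (h1 : inSub T A r m) (h2 : inSub T A m u) : inSub T A r u := by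
  obtain ⟨hm, k1, hk1, hd1⟩ := h1
  obtain ⟨hu, k2, hk2, hd2⟩ := h2
  exact ⟨hu, k1 + k2, by rw [Function.iterate_add_apply, hk2, hk1], by omega⟩

lemma inSub_step {r u : ℕ} (h : inSub T A r u) (hne : u ≠ r) :
    u ≠ A ∧ inSub T A r (par T A u) := by
  obtain ⟨hu, k, hk, hd⟩ := h
  have hkpos : k ≠ 0 := by
    intro h0; rw [h0] at hk; exact hne hk
  have huA : u ≠ A := by
    intro h0
    rw [h0, edist_self] at hd
    omega
  have hdp := dep_par hT hA hu huA
  refine ⟨huA, par_mem hT hA hu huA, k - 1, ?_, by omega⟩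
  have h2 : (par T A)^[k - 1 + 1] u = r := by
    rw [show k - 1 + 1 = k by omega]; exact hk
  rw [Function.iterate_succ_apply] at h2
  exact h2

lemma inSub_mem_root {r u : ℕ} (h : inSub T A r u) : r ∈ T.verts := by
  obtain ⟨hu, k, hk, hd⟩ := h
  induction k generalizing u with
  | zero => rw [← hk]; exact hu
  | succ k ih =>
    have huA : u ≠ A := by
      intro h0
      rw [h0, edist_self] at hd
      omega
    have hdp := dep_par hT hA hu huA
    exact ih (par_mem hT hA hu huA) (by rw [← Function.iterate_succ_apply]; exact hk) (by omega)

lemma inSub_A {u : ℕ} (hu : u ∈ T.verts) : inSub T A A u := by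
  suffices h : ∀ n u, u ∈ T.verts → T.edist A u = n → inSub T A A u by
    exact h _ u hu rfl
  intro n
  induction n using Nat.strong_induction_on with
  | _ n ih =>
    intro u hu hd
    rcases Nat.eq_zero_or_pos n with rfl | hpos
    · rw [(dep_eq_zero_iff hT hA hu).mp hd]
      exact inSub_refl hT hA hA
    · have hne : u ≠ A := by
        intro h0; rw [h0, edist_self] at hd; omega
      have hdp := dep_par hT hA hu hne
      have := ih (n - 1) (by omega) (par T A u) (par_mem hT hA hu hne) (by omega)
      exact inSub_trans hT hA this (inSub_of_par hT hA hu hne)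

/-- two distinct children's subtrees are disjoint: same-depth roots coincide. -/
lemma inSub_unique_depth {r r' u : ℕ} (h1 : inSub T A r u) (h2 : inSub T A r' u)
    (hd : T.edist A r = T.edist A r') : r = r' := by
  obtain ⟨hu, k1, hk1, hd1⟩ := h1
  obtain ⟨_, k2, hk2, hd2⟩ := h2
  have : k1 = k2 := by omega
  rw [← hk1, ← hk2, this]

lemma dep_le_of_walk {u w n : ℕ} (hu : u ∈ T.verts) (hw : T.WalkLen u w n) :
    T.edist A w ≤ T.edist A u + n :=
  edist_le ((walkLen_edist (tree_reach hT hA hu)).trans hw)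

lemma inSub_parent_of_child {c u : ℕ} (h : inSub T A u c) (hne : c ≠ u)
    (hpar : par T A c ≠ u) : inSub T A u (par T A c) ∧ par T A c ≠ A := by
  have hstep := inSub_step hT hA h hne
  refine ⟨hstep.2, ?_⟩
  intro h0
  have := inSub_dep_le hT hA (h0 ▸ hstep.2)
  have hcv := h.1
  have hcA := hstep.1
  have := dep_par hT hA hcv hcA
  -- dep u ≤ dep (par c) = 0
  have hu0 : T.edist A u = 0 := by
    rw [h0, edist_self] at *
    omega
  have : u = A := (dep_eq_zero_iff hT hA (inSub_mem_root hT hA h)).mp hu0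
  -- then par c = A = u contradiction
  exact hpar (by rw [h0, this])

end Tree2

section Cycle

variable {C : MGraph} (hC : C.IsOddCycle)
include hC
set_option linter.unusedSectionVars false

lemma cycle_n3 : ∃ n f g, 3 ≤ n ∧ Set.InjOn f (Set.Iio n) ∧ Set.InjOn g (Set.Iio n) ∧
    C.verts = (Finset.range n).image f ∧
    C.edges = (Finset.range n).image g ∧
    ∀ i < n, C.ends (g i) = Sym2.mk (f i) (f ((i + 1) % n)) := by
  obtain ⟨n, hodd, h2, f, g, hf, hg, hv, he, hends⟩ := hC
  refine ⟨n, f, g, ?_, hf, hg, hv, he, hends⟩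
  rcases hodd with ⟨m, hm⟩
  omega

lemma cycle_ends_mem : ∀ e ∈ C.edges, ∀ x ∈ C.ends e, x ∈ C.verts := by
  obtain ⟨n, f, g, h3, hf, hg, hv, he, hends⟩ := cycle_n3 hC
  intro e hee x hx
  rw [he, Finset.mem_image] at hee
  obtain ⟨i, hi, rfl⟩ := hee
  rw [Finset.mem_range] at hi
  rw [hends i hi, Sym2.mem_iff] at hx
  rw [hv, Finset.mem_image]
  rcases hx with rfl | rfl
  · exact ⟨i, Finset.mem_range.mpr hi, rfl⟩
  · exact ⟨(i + 1) % n, Finset.mem_range.mpr (Nat.mod_lt _ (by omega)), rfl⟩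

lemma cycle_degree_mem {u : ℕ} (hu : u ∈ C.verts) : C.degree u = 2 := by
  obtain ⟨n, f, g, h3, hf, hg, hv, he, hends⟩ := cycle_n3 hC
  rw [hv, Finset.mem_image] at hu
  obtain ⟨j, hj, rfl⟩ := hu
  rw [Finset.mem_range] at hj
  have hnoloop : ∀ i < n, f i ≠ f ((i + 1) % n) := by
    intro i hi hEq
    have h1 : i = (i + 1) % n :=
      hf (Set.mem_Iio.mpr hi) (Set.mem_Iio.mpr (Nat.mod_lt _ (by omega))) hEq
    rcases Nat.lt_or_ge (i + 1) n with h | h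
    · rw [Nat.mod_eq_of_lt h] at h1; omega
    · have hin : i + 1 = n := by omega
      rw [hin, Nat.mod_self] at h1
      omega
  rw [degree, he, Finset.sum_image (by
    intro a ha b hb hab
    exact hg (Set.mem_Iio.mpr (Finset.mem_range.mp ha))
      (Set.mem_Iio.mpr (Finset.mem_range.mp hb)) hab)]
  set j' := if j = 0 then n - 1 else j - 1 with hj'
  have hj'lt : j' < n := by rw [hj']; split <;> omega
  have hjj' : j ≠ j' := by rw [hj']; split <;> omega
  have hj'succ : (j' + 1) % n = j := by
    rw [hj']
    by_cases h0 : j = 0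
    · subst h0
      rw [if_pos rfl, show n - 1 + 1 = n from by omega, Nat.mod_self]
    · rw [if_neg h0, show j - 1 + 1 = j from by omega, Nat.mod_eq_of_lt hj]
  have hterm : ∀ i ∈ Finset.range n,
      (if C.ends (g i) = Sym2.mk (f j) (f j) then 2
        else if f j ∈ C.ends (g i) then 1 else 0) = if i = j ∨ i = j' then 1 else 0 := by
    intro i hi
    rw [Finset.mem_range] at hi
    rw [hends i hi]
    rw [if_neg (by
      intro hEq
      rw [Sym2.eq_iff] at hEq
      rcases hEq with ⟨h1, h2⟩ | ⟨h1, h2⟩ <;> exact hnoloop i hi (by rw [h1, h2]))]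
    have hmem : f j ∈ Sym2.mk (f i) (f ((i + 1) % n)) ↔ (i = j ∨ i = j') := by
      rw [Sym2.mem_iff]
      constructor
      · rintro (h | h)
        · left
          exact (hf (Set.mem_Iio.mpr hi) (Set.mem_Iio.mpr hj) h.symm)
        · right
          have h1 : (i + 1) % n = j :=
            hf (Set.mem_Iio.mpr (Nat.mod_lt _ (by omega))) (Set.mem_Iio.mpr hj) h.symm
          rw [hj']
          rcases Nat.lt_or_ge (i + 1) n with hh | hh
          · rw [Nat.mod_eq_of_lt hh] at h1
            split <;> omega
          · have hin : i + 1 = n := by omega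
            rw [hin, Nat.mod_self] at h1
            split <;> omega
      · rintro (rfl | rfl)
        · left; rfl
        · right
          rw [hj'succ]
    by_cases hm : f j ∈ Sym2.mk (f i) (f ((i + 1) % n))
    · rw [if_pos hm, if_pos (hmem.mp hm)]
    · rw [if_neg hm, if_neg (fun hh => hm (hmem.mpr hh))]
  rw [Finset.sum_congr rfl hterm]
  have hfil : (Finset.range n).filter (fun i => i = j ∨ i = j') = {j, j'} := by
    ext i
    simp only [Finset.mem_filter, Finset.mem_range, Finset.mem_insert, Finset.mem_singleton]
    constructor
    · tauto
    · rintro (rfl | rfl)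
      · exact ⟨hj, Or.inl rfl⟩
      · exact ⟨hj'lt, Or.inr rfl⟩
  rw [← Finset.card_filter, hfil, Finset.card_insert_of_notMem (by simp [hjj']),
    Finset.card_singleton]

lemma cycle_degree_not_mem {u : ℕ} (hu : u ∉ C.verts) : C.degree u = 0 := by
  rw [degree, Finset.sum_eq_zero]
  intro e he
  have h1 : u ∉ C.ends e := fun hmem => hu (cycle_ends_mem hC e he u hmem)
  rw [if_neg, if_neg h1]
  intro hEq
  exact h1 (by rw [hEq]; exact Sym2.mem_mk_left u u)

end Cycle

open Finset

lemma reach_closed {X : MGraph} {P : ℕ → Prop} {a : ℕ} (ha : P a)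
    (hstep : ∀ x y, P x → X.Adj x y → P y) : ∀ z, X.Reach a z → P z := by
  intro z hz
  induction hz with
  | refl => exact ha
  | tail hr hadj ih => exact hstep _ _ ih hadj

lemma induce_wf (G : MGraph) (S : Finset ℕ) :
    ∀ e ∈ (G.induce S).edges, ∀ x ∈ (G.induce S).ends e, x ∈ (G.induce S).verts := by
  intro e he x hx
  rw [mem_induce_edges] at he
  exact he.2 x hx

section Ctx

variable {G C T : MGraph} {A d v : ℕ}
variable (hG : CycleWithTreeAt G C T A)
  (hd : 1 ≤ d) (hvT : v ∈ T.verts) (hdist : T.edist A v = d)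

set_option linter.unusedSectionVars false

/-- the vertex set of the `A`-component of `G - v` -/
def V0 (G : MGraph) (A v : ℕ) : Finset ℕ :=
  (G.delVert v).verts.filter (fun u => (G.delVert v).Reach A u)

include hG

lemma ctx_hT : T.IsTree := hG.2.1

lemma A_mem_CT : A ∈ C.verts ∧ A ∈ T.verts := by
  have h := hG.2.2.1
  have : A ∈ C.verts ∩ T.verts := by rw [h]; exact Finset.mem_singleton_self A
  rw [Finset.mem_inter] at this
  exact this

lemma ctx_hA : A ∈ T.verts := (A_mem_CT hG).2

lemma CT_inter {x : ℕ} (h1 : x ∈ C.verts) (h2 : x ∈ T.verts) : x = A := by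
  have : x ∈ C.verts ∩ T.verts := Finset.mem_inter.mpr ⟨h1, h2⟩
  rw [hG.2.2.1] at this
  exact Finset.mem_singleton.mp this

lemma C_edge_ends {e : ℕ} (he : e ∈ C.edges) : ∀ x ∈ G.ends e, x ∈ C.verts := by
  intro x hx
  rw [hG.2.2.2.2.2.2.1 e he] at hx
  exact cycle_ends_mem hG.1 e he x hx

lemma T_edge_ends {e : ℕ} (he : e ∈ T.edges) : G.ends e = T.ends e :=
  hG.2.2.2.2.2.2.2 e he

lemma G_edges_eq : G.edges = C.edges ∪ T.edges := hG.2.2.2.2.2.1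

lemma G_verts_eq : G.verts = C.verts ∪ T.verts := hG.2.2.2.2.1

lemma T_sub_G : T.verts ⊆ G.verts := by
  rw [G_verts_eq hG]; exact Finset.subset_union_right

lemma degree_split (u : ℕ) : G.degree u = C.degree u + T.degree u := by
  rw [degree, G_edges_eq hG, Finset.sum_union hG.2.2.2.1, degree, degree]
  congr 1
  · apply Finset.sum_congr rfl
    intro e he
    rw [hG.2.2.2.2.2.2.1 e he]
  · apply Finset.sum_congr rfl
    intro e he
    rw [T_edge_ends hG he]

lemma deg_G_A : G.degree A = 2 + (children T A A).card := by
  rw [degree_split hG, cycle_degree_mem hG.1 (A_mem_CT hG).1,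
    degree_tree_root (ctx_hT hG) (ctx_hA hG)]

lemma W_not_C {u : ℕ} (hu : u ∈ T.verts) (hne : u ≠ A) : u ∉ C.verts :=
  fun h => hne (CT_inter hG h hu)

lemma deg_G_W {u : ℕ} (hu : u ∈ T.verts) (hne : u ≠ A) :
    G.degree u = 1 + (children T A u).card := by
  rw [degree_split hG, cycle_degree_not_mem hG.1 (W_not_C hG hu hne),
    degree_tree_nonroot (ctx_hT hG) (ctx_hA hG) hu hne]
  omega

lemma T_edge_ends_mem {e : ℕ} (he : e ∈ T.edges) : ∀ x ∈ G.ends e, x ∈ T.verts := by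
  intro x hx
  rw [T_edge_ends hG he] at hx
  have hT := ctx_hT hG
  exact tree_wf hT e he x hx

lemma G_edge_ends {e : ℕ} (he : e ∈ G.edges) : ∀ x ∈ G.ends e, x ∈ G.verts := by
  rw [G_edges_eq hG, Finset.mem_union] at he
  intro x hx
  rcases he with he | he
  · rw [G_verts_eq hG, Finset.mem_union]; exact Or.inl (C_edge_ends hG he x hx)
  · rw [G_verts_eq hG, Finset.mem_union]; exact Or.inr (T_edge_ends_mem hG he x hx)

lemma component_delVert_eq (hvG : v ∈ G.verts) :
    (G.delVert v).component A = G.induce (V0 G A v) := by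
  refine mgraph_ext rfl ?_ rfl
  show ((G.delVert v).edges).filter _ = _
  rw [induce_edges]
  show (G.edges.filter _).filter _ = _
  rw [Finset.filter_filter]
  apply Finset.filter_congr
  intro e he
  have hVnv : v ∉ V0 G A v := by
    rw [V0, Finset.mem_filter]
    rintro ⟨hmem, _⟩
    exact (Finset.notMem_erase v G.verts) hmem
  constructor
  · rintro ⟨_, h2⟩; exact h2
  · intro h2
    refine ⟨?_, h2⟩
    intro hv
    exact hVnv (h2 v hv)

include hvT hdist hd

lemma v_ne_A : v ≠ A := by
  intro h
  rw [h, edist_self] at hdist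
  omega

lemma not_inSub_v_A : ¬ inSub T A v A := by
  intro h
  have := inSub_dep_le (ctx_hT hG) (ctx_hA hG) h
  rw [hdist, edist_self] at this
  omega

/-- characterization of the tree part of `V0`. -/
lemma V0_T_char {u : ℕ} (hu : u ∈ T.verts) :
    (u ∈ V0 G A v ↔ ¬ inSub T A v u) := by
  have hT := ctx_hT hG
  have hA := ctx_hA hG
  constructor
  · -- reachability implies not in subtree of v
    rw [V0, Finset.mem_filter]
    rintro ⟨hmem, hreach⟩
    -- closure argument
    have hcl : ∀ x, (G.delVert v).Reach A x → ¬ (x ∈ T.verts ∧ inSub T A v x) := by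
      refine reach_closed ?_ ?_
      · rintro ⟨_, hsub⟩
        exact not_inSub_v_A hG hd hvT hdist hsub
      · intro b c ih hadj
        rintro ⟨hcT, hsub⟩
        obtain ⟨e, he, hends⟩ := hadj
        rw [delVert] at he
        simp only [Finset.mem_filter] at he
        obtain ⟨heG, hve⟩ := he
        -- the edge is a tree edge
        have heT : e ∈ T.edges := by
          rw [G_edges_eq hG, Finset.mem_union] at heG
          rcases heG with hC | hT'
          · exfalso
            have hcC : c ∈ C.verts := C_edge_ends hG hC c (by
              show c ∈ G.ends e
              rw [show (G.delVert v).ends = G.ends from rfl] at hends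
              rw [hends]; exact Sym2.mem_mk_right b c)
            have hcA : c = A := CT_inter hG hcC hcT
            rw [hcA] at hsub
            exact not_inSub_v_A hG hd hvT hdist hsub
          · exact hT'
        have hendsT : T.ends e = Sym2.mk b c := by
          rw [← T_edge_ends hG heT]
          exact hends
        have hends' : G.ends e = Sym2.mk b c := hends
        have hbc : b ≠ v ∧ c ≠ v := by
          constructor <;> intro hEq
          · apply hve; rw [hends', ← hEq]; exact Sym2.mem_mk_left b c
          · apply hve; rw [hends', ← hEq]; exact Sym2.mem_mk_right b c
        rcases edge_cases hT hA heT hendsT with ⟨hcv, hcA, _, hbpar⟩ | ⟨hbv, hbA, _, hcpar⟩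
        · -- b = par c
          have hstep := inSub_step hT hA hsub hbc.2
          apply ih
          refine ⟨by rw [hbpar]; exact par_mem hT hA hcv hcA, by rw [hbpar]; exact hstep.2⟩
        · -- c = par b
          apply ih
          have : inSub T A v b := by
            refine inSub_trans hT hA ?_ (inSub_of_par hT hA hbv hbA)
            rw [← hcpar]; exact hsub
          exact ⟨hbv, this⟩
    intro hsub
    exact hcl u hreach ⟨hu, hsub⟩
  · -- not in subtree implies reachable via parent chain
    intro hnsub
    rw [V0, Finset.mem_filter]
    have hT := ctx_hT hG
    have hA := ctx_hA hG
    have hkey : ∀ n x, x ∈ T.verts → T.edist A x = n → ¬ inSub T A v x →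
        (G.delVert v).Reach A x := by
      intro n
      induction n using Nat.strong_induction_on with
      | _ n ih =>
        intro x hx hdx hnsx
        rcases Nat.eq_zero_or_pos n with rfl | hpos
        · rw [(dep_eq_zero_iff hT hA hx).mp hdx]
          exact Relation.ReflTransGen.refl
        · have hxA : x ≠ A := by
            intro h0; rw [h0, edist_self] at hdx; omega
          have hxv : x ≠ v := fun h0 => hnsx (h0 ▸ inSub_refl hT hA hx)
          have hpv : par T A x ∈ T.verts := par_mem hT hA hx hxA
          have hpdep := dep_par hT hA hx hxA
          have hpns : ¬ inSub T A v (par T A x) := by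
            intro h0
            exact hnsx (inSub_trans hT hA h0 (inSub_of_par hT hA hx hxA))
          have hpnv : par T A x ≠ v := fun h0 => hpns (h0 ▸ inSub_refl hT hA hpv)
          have hreach := ih (n - 1) (by omega) (par T A x) hpv (by omega) hpns
          refine Relation.ReflTransGen.tail hreach ?_
          refine ⟨dE T A x, ?_, ?_⟩
          · rw [delVert]
            simp only [Finset.mem_filter]
            refine ⟨by rw [G_edges_eq hG, Finset.mem_union]; exact Or.inr (dE_mem hT hA hx hxA), ?_⟩
            show ¬ v ∈ G.ends (dE T A x)
            rw [T_edge_ends hG (dE_mem hT hA hx hxA), dE_ends hT hA hx hxA, Sym2.mem_iff]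
            rintro (h | h)
            · exact hpnv h.symm
            · exact hxv h.symm
          · show G.ends _ = _
            rw [T_edge_ends hG (dE_mem hT hA hx hxA), dE_ends hT hA hx hxA]
    refine ⟨?_, hkey _ u hu rfl hnsub⟩
    rw [delVert]
    have huv : u ≠ v := fun h0 => hnsub (h0 ▸ inSub_refl hT hA hu)
    exact Finset.mem_erase.mpr ⟨huv, T_sub_G hG hu⟩

lemma A_mem_V0 : A ∈ V0 G A v :=
  (V0_T_char hG hd hvT hdist (ctx_hA hG)).mpr (not_inSub_v_A hG hd hvT hdist)

lemma V0_sub_G : V0 G A v ⊆ G.verts := by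
  intro x hx
  rw [V0, Finset.mem_filter] at hx
  exact Finset.erase_subset v G.verts hx.1

end Ctx

open Finset

/-- deficient vertices: present tree vertices with a missing descendant -/
def DefS (T : MGraph) (A : ℕ) (V : Finset ℕ) : Finset ℕ :=
  (T.verts ∩ V).filter (fun u => ∃ w ∈ T.verts, inSub T A u w ∧ w ∉ V)

/-- the ancestor of `v` at depth `i` -/
def uuF (T : MGraph) (A d v : ℕ) (i : ℕ) : ℕ := (par T A)^[d - i] v

def InvP (G T : MGraph) (A d v : ℕ) (V : Finset ℕ) (m : ℕ) : Prop :=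
  V ⊆ G.verts ∧
  (∀ u ∈ V, u ∈ T.verts → u ≠ A → par T A u ∈ V) ∧
  (∀ u ∈ V, ¬ inSub T A v u) ∧
  1 ≤ m ∧ m ≤ d ∧
  DefS T A V = (Finset.range m).image (uuF T A d v)

lemma mem_DefS {T : MGraph} {A : ℕ} {V : Finset ℕ} {u : ℕ} :
    u ∈ DefS T A V ↔ u ∈ T.verts ∧ u ∈ V ∧ ∃ w ∈ T.verts, inSub T A u w ∧ w ∉ V := by
  rw [DefS, Finset.mem_filter, Finset.mem_inter]
  tauto

section TreeMore

variable {T : MGraph} {A : ℕ}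
variable (hT : T.IsTree) (hA : A ∈ T.verts)
include hT hA
set_option linter.unusedSectionVars false

lemma inSub_comparable {u r w : ℕ} (h1 : inSub T A u w) (h2 : inSub T A r w) :
    inSub T A u r ∨ inSub T A r u := by
  obtain ⟨hw, k1, hk1, hd1⟩ := h1
  obtain ⟨_, k2, hk2, hd2⟩ := h2
  rcases le_or_gt k1 k2 with h | h
  · right
    refine ⟨inSub_mem_root hT hA ⟨hw, k1, hk1, hd1⟩, k2 - k1, ?_, by omega⟩
    rw [← hk1, ← Function.iterate_add_apply, show k2 - k1 + k1 = k2 by omega, hk2]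
  · left
    refine ⟨inSub_mem_root hT hA ⟨hw, k2, hk2, hd2⟩, k1 - k2, ?_, by omega⟩
    rw [← hk2, ← Function.iterate_add_apply, show k1 - k2 + k2 = k1 by omega, hk1]

variable {d v : ℕ} (hvT : v ∈ T.verts) (hdist : T.edist A v = d)
include hvT hdist

lemma uuF_chain {i : ℕ} (hi : i ≤ d) :
    uuF T A d v i ∈ T.verts ∧ T.edist A (uuF T A d v i) = i := by
  rw [uuF]
  have : ∀ k ≤ d, (par T A)^[k] v ∈ T.verts ∧ T.edist A ((par T A)^[k] v) = d - k := by
    intro k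
    induction k with
    | zero => intro _; exact ⟨hvT, by simpa using hdist⟩
    | succ k ih =>
      intro hk
      obtain ⟨hm, hdep⟩ := ih (by omega)
      have hne : (par T A)^[k] v ≠ A := by
        intro h0
        rw [h0, edist_self] at hdep
        omega
      rw [Function.iterate_succ_apply']
      have := dep_par hT hA hm hne
      exact ⟨par_mem hT hA hm hne, by omega⟩
  obtain ⟨h1, h2⟩ := this (d - i) (by omega)
  exact ⟨h1, by omega⟩

lemma uuF_mem {i : ℕ} (hi : i ≤ d) : uuF T A d v i ∈ T.verts :=
  (uuF_chain hT hA hvT hdist hi).1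

lemma uuF_dep {i : ℕ} (hi : i ≤ d) : T.edist A (uuF T A d v i) = i :=
  (uuF_chain hT hA hvT hdist hi).2

lemma uuF_d : uuF T A d v d = v := by
  rw [uuF, Nat.sub_self]
  rfl

lemma uuF_zero (hd : 1 ≤ d) : uuF T A d v 0 = A := by
  have h1 := uuF_dep hT hA hvT hdist (show 0 ≤ d by omega)
  exact (dep_eq_zero_iff hT hA (uuF_mem hT hA hvT hdist (show 0 ≤ d by omega))).mp h1

lemma uuF_inSub {i j : ℕ} (hij : i ≤ j) (hj : j ≤ d) :
    inSub T A (uuF T A d v i) (uuF T A d v j) := by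
  refine ⟨uuF_mem hT hA hvT hdist hj, j - i, ?_, ?_⟩
  · rw [uuF, uuF, ← Function.iterate_add_apply]
    congr 1
    omega
  · rw [uuF_dep hT hA hvT hdist hj, uuF_dep hT hA hvT hdist (by omega)]
    omega

lemma uuF_par {i : ℕ} (h1 : 1 ≤ i) (hi : i ≤ d) :
    par T A (uuF T A d v i) = uuF T A d v (i - 1) := by
  have hsub := uuF_inSub hT hA hvT hdist (show i - 1 ≤ i by omega) hi
  have hne : uuF T A d v i ≠ uuF T A d v (i - 1) := by
    intro h0
    have d1 := uuF_dep hT hA hvT hdist hi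
    have d2 := uuF_dep hT hA hvT hdist (show i - 1 ≤ d by omega)
    rw [h0] at d1
    omega
  have hstep := inSub_step hT hA hsub hne
  -- inSub (uuF (i-1)) (par (uuF i)) with equal depth
  have hdp : T.edist A (par T A (uuF T A d v i)) = i - 1 := by
    have := dep_par hT hA (uuF_mem hT hA hvT hdist hi) hstep.1
    have := uuF_dep hT hA hvT hdist hi
    omega
  exact (inSub_eq_of_dep hT hA hstep.2 (by
    rw [hdp, uuF_dep hT hA hvT hdist (show i - 1 ≤ d by omega)]))

lemma uuF_of_inSub {u i : ℕ} (hi : i ≤ d) (h : inSub T A u (uuF T A d v i)) :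
    u = uuF T A d v (T.edist A u) ∧ T.edist A u ≤ i := by
  obtain ⟨hw, k, hk, hd⟩ := h
  rw [uuF_dep hT hA hvT hdist hi] at hd
  have hdu : T.edist A u = i - k := by omega
  rw [hdu]
  refine ⟨?_, by omega⟩
  rw [← hk, uuF, uuF, ← Function.iterate_add_apply]
  congr 1
  omega

end TreeMore

open Finset

def Iso.cast {G G' H H' : MGraph} (hG : G = G') (hH : H = H') (φ : Iso G H) : Iso G' H' :=
  hG ▸ hH ▸ φ

lemma Iso.cast_vmap {G G' H H' : MGraph} (hG : G = G') (hH : H = H') (φ : Iso G H) :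
    (φ.cast hG hH).vmap = φ.vmap := by subst hG hH; rfl

lemma vmap_vmap_symm {G H : MGraph} (hWF : ∀ e ∈ G.edges, ∀ x ∈ G.ends e, x ∈ G.verts)
    (φ : Iso G H) {y : ℕ} (hy : y ∈ H.verts) : φ.vmap ((φ.symm hWF).vmap y) = y :=
  φ.vmap_bij.surjOn.rightInvOn_invFunOn hy

def IsCan (G : MGraph) (V : Finset ℕ) (s : ℕ) (B Cs : Finset ℕ) (e₁ e₂ v₁ v₂ : ℕ) : Prop :=
  s ∈ V ∧ s ∉ B ∧ s ∉ Cs ∧ Disjoint B Cs ∧ B ⊆ V ∧ Cs ⊆ V ∧ v₁ ∈ B ∧ v₂ ∈ Cs ∧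
  e₁ ∈ (G.induce V).edges ∧ e₂ ∈ (G.induce V).edges ∧ e₁ ≠ e₂ ∧
  G.ends e₁ = Sym2.mk s v₁ ∧ G.ends e₂ = Sym2.mk s v₂ ∧
  (∀ e ∈ (G.induce V).edges, e = e₁ ∨ e = e₂ ∨ (∀ x ∈ G.ends e, x ∈ B) ∨
    (∀ x ∈ G.ends e, x ∈ Cs) ∨ (∀ x ∈ G.ends e, x ∈ V \ (B ∪ Cs))) ∧
  ∃ φ : Iso (G.induce B) (G.induce Cs), φ.vmap v₁ = v₂

lemma isCan_of_cancellation {G : MGraph} {V : Finset ℕ} {s : ℕ} {B Cs : Finset ℕ}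
    (h : (G.induce V).Cancellation s B Cs) : ∃ e₁ e₂ v₁ v₂, IsCan G V s B Cs e₁ e₂ v₁ v₂ := by
  obtain ⟨e₁, e₂, v₁, v₂, hsV, hsB, hsC, hdisj, hBV, hCV, hv1, hv2, he1, he2, hne,
    hend1, hend2, hcond, φ, hφ⟩ := h
  refine ⟨e₁, e₂, v₁, v₂, hsV, hsB, hsC, hdisj, hBV, hCV, hv1, hv2, he1, he2, hne,
    hend1, hend2, hcond,
    φ.cast (induce_induce G V B hBV) (induce_induce G V Cs hCV), ?_⟩
  rw [Iso.cast_vmap]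
  exact hφ

lemma IsCan.swap {G : MGraph} {V : Finset ℕ} {s : ℕ} {B Cs : Finset ℕ} {e₁ e₂ v₁ v₂ : ℕ}
    (h : IsCan G V s B Cs e₁ e₂ v₁ v₂) : IsCan G V s Cs B e₂ e₁ v₂ v₁ := by
  obtain ⟨hsV, hsB, hsC, hdisj, hBV, hCV, hv1, hv2, he1, he2, hne, hend1, hend2, hcond, φ, hφ⟩ := h
  refine ⟨hsV, hsC, hsB, hdisj.symm, hCV, hBV, hv2, hv1, he2, he1, hne.symm,
    hend2, hend1, ?_, ?_⟩
  · intro e he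
    have := hcond e he
    rw [Finset.union_comm Cs B]
    tauto
  · refine ⟨φ.symm (induce_wf G B), ?_⟩
    rw [← hφ]
    exact vmap_symm_vmap (induce_wf G B) φ hv1

section StepCtx

variable {G C T : MGraph} {A d v : ℕ}
variable (hG : CycleWithTreeAt G C T A)
  (hd : 1 ≤ d) (hvT : v ∈ T.verts) (hdist : T.edist A v = d)

set_option linter.unusedSectionVars false
include hG hd hvT hdist

/-- all the one-sided structural consequences of a cancellation -/
lemma side_facts {V : Finset ℕ} {m : ℕ} (hInv : InvP G T A d v V m)
    {s : ℕ} {B Cs : Finset ℕ} {e₁ e₂ v₁ v₂ : ℕ}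
    (hX : IsCan G V s B Cs e₁ e₂ v₁ v₂) (hback : C.verts ⊆ V \ (B ∪ Cs)) :
    (∀ u ∈ B, u ∈ T.verts ∧ u ≠ A) ∧
    e₁ ∈ T.edges ∧
    par T A v₁ = s ∧
    (∀ u ∈ B, u ≠ v₁ → par T A u ∈ B) ∧
    (∀ u ∈ B, inSub T A v₁ u) ∧
    (∀ c, inSub T A v₁ c → c ∈ V → c ∈ B) := by
  obtain ⟨hsV, hsB, hsC, hdisj, hBV, hCV, hv1, hv2, he1, he2, hne, hend1, hend2, hcond, hiso⟩ := hX
  have hT := ctx_hT hG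
  have hA := ctx_hA hG
  -- B is inside the proper tree part
  have hBW : ∀ u ∈ B, u ∈ T.verts ∧ u ≠ A := by
    intro u hu
    have huV : u ∈ V := hBV hu
    have hnotC : u ∉ C.verts := by
      intro hc
      have := hback hc
      rw [Finset.mem_sdiff] at this
      exact this.2 (Finset.mem_union_left _ hu)
    have huG : u ∈ G.verts := hInv.1 huV
    rw [G_verts_eq hG, Finset.mem_union] at huG
    have huT : u ∈ T.verts := huG.resolve_left hnotC
    exact ⟨huT, fun h0 => hnotC (h0 ▸ (A_mem_CT hG).1)⟩
  have he1T : e₁ ∈ T.edges := by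
    have he1G : e₁ ∈ G.edges := (mem_induce_edges.mp he1).1
    rw [G_edges_eq hG, Finset.mem_union] at he1G
    rcases he1G with hc | ht
    · exfalso
      have : v₁ ∈ C.verts := C_edge_ends hG hc v₁ (by rw [hend1]; exact Sym2.mem_mk_right s v₁)
      exact W_not_C hG (hBW v₁ hv1).1 (hBW v₁ hv1).2 this
    · exact ht
  -- the climb dichotomy
  have hclimb0 : ∀ u ∈ B, (par T A u ∈ B ∨ (u = v₁ ∧ par T A u = s)) := by
    intro u hu
    obtain ⟨huT, huA⟩ := hBW u hu
    have huV := hBV hu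
    have hpV : par T A u ∈ V := hInv.2.1 u huV huT huA
    have heMem : dE T A u ∈ (G.induce V).edges := by
      rw [mem_induce_edges]
      refine ⟨by rw [G_edges_eq hG, Finset.mem_union]; exact Or.inr (dE_mem hT hA huT huA), ?_⟩
      intro x hx
      rw [T_edge_ends hG (dE_mem hT hA huT huA), dE_ends hT hA huT huA, Sym2.mem_iff] at hx
      rcases hx with rfl | rfl
      exacts [hpV, huV]
    have hGends : G.ends (dE T A u) = Sym2.mk (par T A u) u := by
      rw [T_edge_ends hG (dE_mem hT hA huT huA), dE_ends hT hA huT huA]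
    rcases hcond _ heMem with he | he | he | he | he
    · -- dE u = e₁ :  s(s,v₁) = s(par u, u)
      rw [he, hend1] at hGends
      rw [Sym2.eq_iff] at hGends
      rcases hGends with ⟨h1, h2⟩ | ⟨h1, h2⟩
      · exact Or.inr ⟨h2.symm, h1.symm⟩
      · exact absurd (h1 ▸ hu) hsB
    · -- dE u = e₂ :  s(s,v₂) = s(par u, u)
      exfalso
      rw [he, hend2] at hGends
      rw [Sym2.eq_iff] at hGends
      rcases hGends with ⟨h1, h2⟩ | ⟨h1, h2⟩
      · exact Finset.disjoint_left.mp hdisj hu (h2 ▸ hv2)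
      · exact hsB (h1 ▸ hu)
    · -- both ends in B
      left
      exact he (par T A u) (by rw [hGends]; exact Sym2.mem_mk_left _ _)
    · -- both ends in Cs: impossible since u ∈ B
      exact absurd (he u (by rw [hGends]; exact Sym2.mem_mk_right _ _))
        (Finset.disjoint_left.mp hdisj hu)
    · -- both ends outside: impossible since u ∈ B
      exfalso
      have := he u (by rw [hGends]; exact Sym2.mem_mk_right _ _)
      rw [Finset.mem_sdiff] at this
      exact this.2 (Finset.mem_union_left _ hu)
  have hclimb : ∀ u ∈ B, u ≠ v₁ → par T A u ∈ B := by
    intro u hu hne'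
    rcases hclimb0 u hu with h | h
    · exact h
    · exact absurd h.1 hne'
  have hparv1 : par T A v₁ = s := by
    rcases hclimb0 v₁ hv1 with hpB | h
    · exfalso
      -- the chain from v₁ would stay in B forever, but depth strictly decreases
      have key : ∀ n, ∀ u ∈ B, T.edist A u ≤ n → False := by
        intro n
        induction n with
        | zero =>
          intro u hu hdep
          obtain ⟨huT, huA⟩ := hBW u hu
          exact huA ((dep_eq_zero_iff hT hA huT).mp (by omega))
        | succ n ih =>
          intro u hu hdep
          obtain ⟨huT, huA⟩ := hBW u hu
          have hpB' : par T A u ∈ B := by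
            rcases hclimb0 u hu with h | h
            · exact h
            · rw [h.1]; exact hpB
          have := dep_par hT hA huT huA
          have hdep0 : 1 ≤ T.edist A u := by
            rcases Nat.eq_zero_or_pos (T.edist A u) with h0 | h0
            · exact absurd ((dep_eq_zero_iff hT hA huT).mp h0) huA
            · exact h0
          exact ih (par T A u) hpB' (by omega)
      exact key (T.edist A v₁) v₁ hv1 le_rfl
    · exact h.2
  -- everything in B is in the subtree of v₁
  have hBsub : ∀ u ∈ B, inSub T A v₁ u := by
    have key : ∀ n, ∀ u ∈ B, T.edist A u = n → inSub T A v₁ u := by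
      intro n
      induction n using Nat.strong_induction_on with
      | _ n ih =>
        intro u hu hdep
        obtain ⟨huT, huA⟩ := hBW u hu
        by_cases hEq : u = v₁
        · rw [hEq]; exact inSub_refl hT hA (hBW v₁ hv1).1
        · have hpB := hclimb u hu hEq
          have hdp := dep_par hT hA huT huA
          have hdep0 : 1 ≤ T.edist A u := by
            rcases Nat.eq_zero_or_pos (T.edist A u) with h0 | h0
            · exact absurd ((dep_eq_zero_iff hT hA huT).mp h0) huA
            · exact h0
          have := ih (n - 1) (by omega) (par T A u) hpB (by omega)
          exact inSub_trans hT hA this (inSub_of_par hT hA huT huA)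
    intro u hu
    exact key _ u hu rfl
  -- and conversely, present subtree members are in B
  have hdeps : T.edist A s + 1 = T.edist A v₁ := by
    rw [← hparv1]
    exact dep_par hT hA (hBW v₁ hv1).1 (hBW v₁ hv1).2
  have hnotSubS : ¬ inSub T A v₁ s := by
    intro h
    have := inSub_dep_le hT hA h
    omega
  have hBfull : ∀ c, inSub T A v₁ c → c ∈ V → c ∈ B := by
    have key : ∀ n, ∀ c, T.edist A c = n → inSub T A v₁ c → c ∈ V → c ∈ B := by
      intro n
      induction n using Nat.strong_induction_on with
      | _ n ih =>
        intro c hdep hsub hcV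
        by_cases hEq : c = v₁
        · rw [hEq]; exact hv1
        · have hcs : c ≠ s := fun h0 => hnotSubS (h0 ▸ hsub)
          have hstep := inSub_step hT hA hsub hEq
          have hcT : c ∈ T.verts := hsub.1
          have hcA : c ≠ A := hstep.1
          have hdp := dep_par hT hA hcT hcA
          have hpsub : inSub T A v₁ (par T A c) := hstep.2
          have hpV : par T A c ∈ V := hInv.2.1 c hcV hcT hcA
          have hpB : par T A c ∈ B := ih (n - 1) (by omega) (par T A c) (by omega) hpsub hpV
          have hpv1 : par T A c ≠ s := fun h0 => hnotSubS (h0 ▸ hpsub)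
          -- the edge from par c to c forces c into B
          have heMem : dE T A c ∈ (G.induce V).edges := by
            rw [mem_induce_edges]
            refine ⟨(by rw [G_edges_eq hG, Finset.mem_union]; exact Or.inr (dE_mem hT hA hcT hcA)), ?_⟩
            intro x hx
            rw [T_edge_ends hG (dE_mem hT hA hcT hcA), dE_ends hT hA hcT hcA, Sym2.mem_iff] at hx
            rcases hx with rfl | rfl
            exacts [hpV, hcV]
          have hGends : G.ends (dE T A c) = Sym2.mk (par T A c) c := by
            rw [T_edge_ends hG (dE_mem hT hA hcT hcA), dE_ends hT hA hcT hcA]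
          rcases hcond _ heMem with he | he | he | he | he
          · -- s(s,v₁) = s(par c, c)
            exfalso
            rw [he, hend1] at hGends
            rw [Sym2.eq_iff] at hGends
            rcases hGends with ⟨h1, h2⟩ | ⟨h1, h2⟩
            · exact hpv1 h1.symm
            · exact hcs h1.symm
          · exfalso
            rw [he, hend2] at hGends
            rw [Sym2.eq_iff] at hGends
            rcases hGends with ⟨h1, h2⟩ | ⟨h1, h2⟩
            · exact hpv1 h1.symm
            · exact hcs h1.symm
          · exact he c (by rw [hGends]; exact Sym2.mem_mk_right _ _)
          · exact absurd (he (par T A c) (by rw [hGends]; exact Sym2.mem_mk_left _ _))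
              (Finset.disjoint_left.mp hdisj hpB)
          · exfalso
            have := he (par T A c) (by rw [hGends]; exact Sym2.mem_mk_left _ _)
            rw [Finset.mem_sdiff] at this
            exact this.2 (Finset.mem_union_left _ hpB)
    intro c h1 h2
    exact key _ c rfl h1 h2
  exact ⟨hBW, he1T, hparv1, hclimb, hBsub, hBfull⟩

variable (hRed : G.Reduced)
include hRed

lemma nolift {V : Finset ℕ} {m : ℕ} (hInv : InvP G T A d v V m)
    {s : ℕ} {B Cs : Finset ℕ} {e₁ e₂ v₁ v₂ : ℕ}
    (hX : IsCan G V s B Cs e₁ e₂ v₁ v₂) (hback : C.verts ⊆ V \ (B ∪ Cs)) :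
    v₁ ∈ DefS T A V ∨ v₂ ∈ DefS T A V := by
  by_contra hcon
  push_neg at hcon
  obtain ⟨hnd1, hnd2⟩ := hcon
  have hT := ctx_hT hG
  have hA := ctx_hA hG
  have hbackC : C.verts ⊆ V \ (Cs ∪ B) := by rw [Finset.union_comm]; exact hback
  obtain ⟨hBW, he1T, hparv1, hclimb, hBsub, hBfull⟩ := side_facts hG hd hvT hdist hInv hX hback
  obtain ⟨hCW, he2T, hparv2, hclimbC, hCsub, hCfull⟩ :=
    side_facts hG hd hvT hdist hInv hX.swap hbackC
  obtain ⟨hsV, hsB, hsC, hdisj, hBV, hCV, hv1, hv2, he1, he2, hne, hend1, hend2, hcond, hiso⟩ := hX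
  -- full subtrees
  have hfullB : ∀ u, inSub T A v₁ u → u ∈ V := by
    intro u hu
    by_contra hnot
    exact hnd1 (mem_DefS.mpr ⟨(hBW v₁ hv1).1, hBV hv1, u, hu.1, hu, hnot⟩)
  have hfullC : ∀ u, inSub T A v₂ u → u ∈ V := by
    intro u hu
    by_contra hnot
    exact hnd2 (mem_DefS.mpr ⟨(hCW v₂ hv2).1, hCV hv2, u, hu.1, hu, hnot⟩)
  have hBeq : ∀ u, u ∈ B ↔ inSub T A v₁ u := by
    intro u
    exact ⟨hBsub u, fun h => hBfull u h (hfullB u h)⟩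
  have hCeq : ∀ u, u ∈ Cs ↔ inSub T A v₂ u := by
    intro u
    exact ⟨hCsub u, fun h => hCfull u h (hfullC u h)⟩
  -- build a cancellation in G itself
  apply hRed s
  refine ⟨B, Cs, e₁, e₂, v₁, v₂, hInv.1 hsV, hsB, hsC, hdisj,
    fun x hx => hInv.1 (hBV hx), fun x hx => hInv.1 (hCV hx), hv1, hv2,
    (mem_induce_edges.mp he1).1, (mem_induce_edges.mp he2).1, hne, hend1, hend2, ?_, hiso⟩
  intro e heG
  rw [G_edges_eq hG, Finset.mem_union] at heG
  rcases heG with hc | ht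
  · -- cycle edge: completely outside
    right; right; right; right
    intro x hx
    have hxC : x ∈ C.verts := C_edge_ends hG hc x hx
    rw [Finset.mem_sdiff]
    refine ⟨by rw [G_verts_eq hG, Finset.mem_union]; exact Or.inl hxC, ?_⟩
    rw [Finset.mem_union]
    rintro (h | h)
    · exact W_not_C hG (hBW x h).1 (hBW x h).2 hxC
    · exact W_not_C hG (hCW x h).1 (hCW x h).2 hxC
  · -- tree edge
    obtain ⟨w, hw, rfl⟩ := edge_structure hT hA ht
    rw [Finset.mem_erase] at hw
    have hGends : G.ends (dE T A w) = Sym2.mk (par T A w) w := by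
      rw [T_edge_ends hG (dE_mem hT hA hw.2 hw.1), dE_ends hT hA hw.2 hw.1]
    by_cases hwB : w ∈ B
    · by_cases hwv1 : w = v₁
      · left
        subst hwv1
        apply edge_unique hT hA (dE_mem hT hA hw.2 hw.1) he1T
        rw [dE_ends hT hA hw.2 hw.1, hparv1, ← T_edge_ends hG he1T, hend1]
      · right; right; left
        intro x hx
        rw [hGends, Sym2.mem_iff] at hx
        rcases hx with rfl | rfl
        · exact hclimb w hwB hwv1
        · exact hwB
    · by_cases hwC : w ∈ Cs
      · by_cases hwv2 : w = v₂
        · right; left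
          subst hwv2
          apply edge_unique hT hA (dE_mem hT hA hw.2 hw.1) he2T
          rw [dE_ends hT hA hw.2 hw.1, hparv2, ← T_edge_ends hG he2T, hend2]
        · right; right; right; left
          intro x hx
          rw [hGends, Sym2.mem_iff] at hx
          rcases hx with rfl | rfl
          · exact hclimbC w hwC hwv2
          · exact hwC
      · -- w outside both: parent must also be outside
        right; right; right; right
        intro x hx
        rw [hGends, Sym2.mem_iff] at hx
        have hpw : par T A w ∉ B ∧ par T A w ∉ Cs := by
          constructor
          · intro hp
            apply hwB
            rw [hBeq]
            exact inSub_trans hT hA ((hBeq _).mp hp) (inSub_of_par hT hA hw.2 hw.1)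
          · intro hp
            apply hwC
            rw [hCeq]
            exact inSub_trans hT hA ((hCeq _).mp hp) (inSub_of_par hT hA hw.2 hw.1)
        rcases hx with rfl | rfl
        · rw [Finset.mem_sdiff, Finset.mem_union]
          exact ⟨T_sub_G hG (par_mem hT hA hw.2 hw.1), by tauto⟩
        · rw [Finset.mem_sdiff, Finset.mem_union]
          exact ⟨T_sub_G hG hw.2, by tauto⟩

end StepCtx

open Finset

section Step2

variable {G C T : MGraph} {A d v : ℕ}
variable (hG : CycleWithTreeAt G C T A)
  (hd : 1 ≤ d) (hvT : v ∈ T.verts) (hdist : T.edist A v = d)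

set_option linter.unusedSectionVars false
include hG hd hvT hdist

lemma chain_walk {B : Finset ℕ} {v₁ : ℕ} (hv1 : v₁ ∈ B)
    (hBW : ∀ u ∈ B, u ∈ T.verts ∧ u ≠ A)
    (hclimb : ∀ u ∈ B, u ≠ v₁ → par T A u ∈ B)
    (hBsub : ∀ u ∈ B, inSub T A v₁ u) :
    ∀ u ∈ B, (G.induce B).WalkLen v₁ u (T.edist A u - T.edist A v₁) := by
  have hT := ctx_hT hG
  have hA := ctx_hA hG
  have key : ∀ n, ∀ u ∈ B, T.edist A u = n →
      (G.induce B).WalkLen v₁ u (T.edist A u - T.edist A v₁) := by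
    intro n
    induction n using Nat.strong_induction_on with
    | _ n ih =>
      intro u hu hdep
      by_cases hEq : u = v₁
      · subst hEq
        rw [Nat.sub_self]
        exact walkLen_zero _ u
      · obtain ⟨huT, huA⟩ := hBW u hu
        have hpB := hclimb u hu hEq
        have hdp := dep_par hT hA huT huA
        have hlt : T.edist A v₁ < T.edist A u := by
          have hle := inSub_dep_le hT hA (hBsub u hu)
          rcases Nat.lt_or_ge (T.edist A v₁) (T.edist A u) with h | h
          · exact h
          · exact absurd (inSub_eq_of_dep hT hA (hBsub u hu) (by omega)) hEq
        have hwp := ih (n - 1) (by omega) (par T A u) hpB (by omega)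
        have hGmem : dE T A u ∈ G.edges := by
          rw [G_edges_eq hG, Finset.mem_union]
          exact Or.inr (dE_mem hT hA huT huA)
        have hadj : (G.induce B).Adj (par T A u) u := by
          refine ⟨dE T A u, ?_, ?_⟩
          · rw [mem_induce_edges]
            refine ⟨hGmem, ?_⟩
            intro x hx
            rw [T_edge_ends hG (dE_mem hT hA huT huA), dE_ends hT hA huT huA,
              Sym2.mem_iff] at hx
            rcases hx with rfl | rfl
            exacts [hpB, hu]
          · show G.ends _ = _
            rw [T_edge_ends hG (dE_mem hT hA huT huA), dE_ends hT hA huT huA]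
        have := hwp.concat hadj
        have harith : T.edist A (par T A u) - T.edist A v₁ + 1
            = T.edist A u - T.edist A v₁ := by omega
        rw [harith] at this
        exact this
  intro u hu
  exact key _ u hu rfl

lemma walk_dep_le {S : Finset ℕ} (hSW : ∀ x ∈ S, x ∈ T.verts ∧ x ≠ A)
    {a b n : ℕ} (ha : a ∈ T.verts) (hw : (G.induce S).WalkLen a b n) :
    T.edist A b ≤ T.edist A a + n := by
  have hT := ctx_hT hG
  have hA := ctx_hA hG
  have hTw : T.WalkLen a b n := by
    obtain ⟨f, h0, hn, hs⟩ := hw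
    refine ⟨f, h0, hn, ?_⟩
    intro i hi
    obtain ⟨e, he, hends⟩ := hs i hi
    rw [mem_induce_edges] at he
    obtain ⟨heG, hsub⟩ := he
    have hendsG : G.ends e = Sym2.mk (f i) (f (i + 1)) := hends
    have heT : e ∈ T.edges := by
      rw [G_edges_eq hG, Finset.mem_union] at heG
      rcases heG with hc | ht
      · exfalso
        have h1 : f i ∈ S := hsub (f i) (by rw [hendsG]; exact Sym2.mem_mk_left _ _)
        have h2 : f i ∈ C.verts := C_edge_ends hG hc (f i)
          (by rw [hendsG]; exact Sym2.mem_mk_left _ _)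
        exact W_not_C hG (hSW _ h1).1 (hSW _ h1).2 h2
      · exact ht
    exact ⟨e, heT, by rw [← T_edge_ends hG heT]; exact hendsG⟩
  exact dep_le_of_walk hT hA ha hTw

/-- the main step analysis -/
lemma step_core {V : Finset ℕ} {m : ℕ} (hInv : InvP G T A d v V m)
    {s : ℕ} {B Cs : Finset ℕ} {e₁ e₂ v₁ v₂ : ℕ}
    (hX : IsCan G V s B Cs e₁ e₂ v₁ v₂) (hback : C.verts ⊆ V \ (B ∪ Cs))
    (hv1D : v₁ ∈ DefS T A V) :
    ∃ j, 1 ≤ j ∧ j < m ∧ InvP G T A d v (V \ (B ∪ Cs)) j ∧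
      (∀ u ∈ B ∪ Cs, u ∈ T.verts) ∧
      (∀ x, ((B ∪ Cs).filter (fun u => T.edist A u = x)).card =
            2 * ((B.filter (fun u => T.edist A u = x)).card)) ∧
      Even (∑ u ∈ (B ∪ Cs).filter (fun u => T.edist A u = d), G.degree u) ∧
      ((children T A A) ∩ (B ∪ Cs)).card = (if j = 1 then 2 else 0) := by
  have hT := ctx_hT hG
  have hA := ctx_hA hG
  have hbackC : C.verts ⊆ V \ (Cs ∪ B) := by rw [Finset.union_comm]; exact hback
  obtain ⟨hBW, he1T, hparv1, hclimb, hBsub, hBfull⟩ := side_facts hG hd hvT hdist hInv hX hback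
  obtain ⟨hCW, he2T, hparv2, hclimbC, hCsub, hCfull⟩ :=
    side_facts hG hd hvT hdist hInv hX.swap hbackC
  obtain ⟨hsV, hsB, hsC, hdisj, hBV, hCV, hv1, hv2, he1, he2, hne12, hend1, hend2, hcond,
    φ, hφ⟩ := hX
  have hv1T : v₁ ∈ T.verts := (hBW v₁ hv1).1
  have hv1A : v₁ ≠ A := (hBW v₁ hv1).2
  have hv2T : v₂ ∈ T.verts := (hCW v₂ hv2).1
  have hv2A : v₂ ≠ A := (hCW v₂ hv2).2
  have hdep1 := dep_par hT hA hv1T hv1A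
  have hdep2 := dep_par hT hA hv2T hv2A
  rw [hparv1] at hdep1
  rw [hparv2] at hdep2
  have hdep12 : T.edist A v₂ = T.edist A v₁ := by omega
  -- identify v₁ on the chain
  have hDefEq := hInv.2.2.2.2.2
  have hmd : m ≤ d := hInv.2.2.2.2.1
  obtain ⟨i, hi_m, hv1uu⟩ : ∃ i, i < m ∧ uuF T A d v i = v₁ := by
    have := hv1D
    rw [hDefEq, Finset.mem_image] at this
    obtain ⟨i, hi, hEq⟩ := this
    exact ⟨i, Finset.mem_range.mp hi, hEq⟩
  have hid : i ≤ d := by omega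
  have hdepv1 : T.edist A v₁ = i := by
    rw [← hv1uu]; exact uuF_dep hT hA hvT hdist hid
  have hi1 : 1 ≤ i := by
    rcases Nat.eq_zero_or_pos i with h0 | h
    · exfalso
      apply hv1A
      rw [← hv1uu, h0]
      exact uuF_zero hT hA hvT hdist hd
    · exact h
  have hs_uu : s = uuF T A d v (i - 1) := by
    rw [← hparv1, ← hv1uu, uuF_par hT hA hvT hdist hi1 hid]
  -- v₂ is not deficient
  have hv2nD : v₂ ∉ DefS T A V := by
    intro hmem
    rw [hDefEq, Finset.mem_image] at hmem
    obtain ⟨i₂, hi₂, hEq₂⟩ := hmem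
    rw [Finset.mem_range] at hi₂
    have : T.edist A v₂ = i₂ := by rw [← hEq₂]; exact uuF_dep hT hA hvT hdist (by omega)
    have : i₂ = i := by omega
    rw [this, hv1uu] at hEq₂
    exact Finset.disjoint_left.mp hdisj (hEq₂ ▸ hv1) hv2
  have hCsfull : ∀ u, inSub T A v₂ u → u ∈ V := by
    intro u hu
    by_contra hnot
    exact hv2nD (mem_DefS.mpr ⟨hv2T, hCV hv2, u, hu.1, hu, hnot⟩)
  -- depth preservation
  have wB := chain_walk hG hd hvT hdist hv1 hBW hclimb hBsub
  have wC := chain_walk hG hd hvT hdist hv2 hCW hclimbC hCsub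
  set ψ := φ.symm (induce_wf G B) with hψ
  have hψv2 : ψ.vmap v₂ = v₁ := by
    rw [← hφ]
    exact vmap_symm_vmap (induce_wf G B) φ hv1
  have mapsBC : ∀ u ∈ B, φ.vmap u ∈ Cs := by
    intro u hu
    exact φ.vmap_bij.mapsTo (Finset.mem_coe.mpr hu)
  have mapsCB : ∀ w ∈ Cs, ψ.vmap w ∈ B := by
    intro w hw
    exact ψ.vmap_bij.mapsTo (Finset.mem_coe.mpr hw)
  have ineqB : ∀ u ∈ B, T.edist A (φ.vmap u) ≤ T.edist A u := by
    intro u hu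
    have hwalk := φ.walk_map (wB u hu)
    rw [hφ] at hwalk
    have := walk_dep_le hG hd hvT hdist (S := Cs) hCW hv2T hwalk
    have hge := inSub_dep_le hT hA (hBsub u hu)
    omega
  have ineqC : ∀ w ∈ Cs, T.edist A (ψ.vmap w) ≤ T.edist A w := by
    intro w hw
    have hwalk := ψ.walk_map (wC w hw)
    rw [hψv2] at hwalk
    have := walk_dep_le hG hd hvT hdist (S := B) hBW hv1T hwalk
    have hge := inSub_dep_le hT hA (hCsub w hw)
    omega
  have hψφ : ∀ u ∈ B, ψ.vmap (φ.vmap u) = u := by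
    intro u hu
    exact vmap_symm_vmap (induce_wf G B) φ (Finset.mem_coe.mpr hu)
  have hφψ : ∀ w ∈ Cs, φ.vmap (ψ.vmap w) = w := by
    intro w hw
    exact vmap_vmap_symm (induce_wf G B) φ (Finset.mem_coe.mpr hw)
  have depmap : ∀ u ∈ B, T.edist A (φ.vmap u) = T.edist A u := by
    intro u hu
    have h1 := ineqB u hu
    have h2 := ineqC (φ.vmap u) (mapsBC u hu)
    rw [hψφ u hu] at h2
    omega
  -- level counts agree
  have cnt : ∀ x, (B.filter (fun u => T.edist A u = x)).card
      = (Cs.filter (fun u => T.edist A u = x)).card := by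
    intro x
    apply Finset.card_bij (fun u _ => φ.vmap u)
    · intro a ha
      rw [Finset.mem_filter] at ha ⊢
      exact ⟨mapsBC a ha.1, by rw [depmap a ha.1]; exact ha.2⟩
    · intro a₁ ha₁ a₂ ha₂ hEq
      rw [Finset.mem_filter] at ha₁ ha₂
      exact φ.vmap_bij.injOn (Finset.mem_coe.mpr ha₁.1) (Finset.mem_coe.mpr ha₂.1) hEq
    · intro b hb
      rw [Finset.mem_filter] at hb
      refine ⟨ψ.vmap b, ?_, hφψ b hb.1⟩
      rw [Finset.mem_filter]
      have h1 : ψ.vmap b ∈ B := mapsCB b hb.1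
      refine ⟨h1, ?_⟩
      have := depmap _ h1
      rw [hφψ b hb.1] at this
      rw [← this]
      exact hb.2
  have fildisj : ∀ x, Disjoint (B.filter (fun u => T.edist A u = x))
      (Cs.filter (fun u => T.edist A u = x)) :=
    fun x => Finset.disjoint_filter_filter hdisj
  have cntU : ∀ x, ((B ∪ Cs).filter (fun u => T.edist A u = x)).card =
      2 * ((B.filter (fun u => T.edist A u = x)).card) := by
    intro x
    rw [Finset.filter_union, Finset.card_union_of_disjoint (fildisj x), ← cnt x]
    omega
  -- the degree sums on level d
  have hnotDef_level : ∀ u ∈ T.verts, u ∈ V → T.edist A u = d → u ∉ DefS T A V := by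
    intro u huT huV hud hmem
    rw [hDefEq, Finset.mem_image] at hmem
    obtain ⟨i', hi', hEq⟩ := hmem
    rw [Finset.mem_range] at hi'
    have : T.edist A u = i' := by rw [← hEq]; exact uuF_dep hT hA hvT hdist (by omega)
    omega
  have hchB : ∀ u ∈ B, T.edist A u = d → ∀ c ∈ children T A u, c ∈ B := by
    intro u hu hud c hc
    rw [mem_children hT hA] at hc
    obtain ⟨hcA, hcT, hcpar⟩ := hc
    have hsubuc : inSub T A u c := by
      rw [← hcpar]
      exact inSub_of_par hT hA hcT hcA
    have hsubv1c : inSub T A v₁ c := inSub_trans hT hA (hBsub u hu) hsubuc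
    have hcV : c ∈ V := by
      by_contra hnot
      exact hnotDef_level u (hBW u hu).1 (hBV hu) hud
        (mem_DefS.mpr ⟨(hBW u hu).1, hBV hu, c, hcT, hsubuc, hnot⟩)
    exact hBfull c hsubv1c hcV
  have hchC : ∀ u ∈ Cs, T.edist A u = d → ∀ c ∈ children T A u, c ∈ Cs := by
    intro u hu hud c hc
    rw [mem_children hT hA] at hc
    obtain ⟨hcA, hcT, hcpar⟩ := hc
    have hsubuc : inSub T A u c := by
      rw [← hcpar]
      exact inSub_of_par hT hA hcT hcA
    have hsubv2c : inSub T A v₂ c := inSub_trans hT hA (hCsub u hu) hsubuc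
    have hcV : c ∈ V := by
      by_contra hnot
      exact hnotDef_level u (hCW u hu).1 (hCV hu) hud
        (mem_DefS.mpr ⟨(hCW u hu).1, hCV hu, c, hcT, hsubuc, hnot⟩)
    exact hCfull c hsubv2c hcV
  -- degree sum of one side
  have degside : ∀ (X : Finset ℕ), (∀ u ∈ X, u ∈ T.verts ∧ u ≠ A) →
      (∀ u ∈ X, T.edist A u = d → ∀ c ∈ children T A u, c ∈ X) →
      (∀ c ∈ X, T.edist A c = d + 1 → par T A c ∈ X) →
      (∑ u ∈ X.filter (fun u => T.edist A u = d), G.degree u)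
        = (X.filter (fun u => T.edist A u = d)).card
          + (X.filter (fun u => T.edist A u = d + 1)).card := by
    intro X hXW hXch hXpar
    have hdeg : ∀ u ∈ X.filter (fun u => T.edist A u = d),
        G.degree u = 1 + (children T A u).card := by
      intro u hu
      rw [Finset.mem_filter] at hu
      exact deg_G_W hG (hXW u hu.1).1 (hXW u hu.1).2
    rw [Finset.sum_congr rfl hdeg, Finset.sum_add_distrib, Finset.sum_const, smul_eq_mul,
      mul_one]
    congr 1
    -- fiberwise count
    rw [Finset.card_eq_sum_card_fiberwise (f := par T A)
      (t := X.filter (fun u => T.edist A u = d)) (by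
        intro c hc
        rw [Finset.mem_coe, Finset.mem_filter] at hc ⊢
        have hpar := hXpar c hc.1 hc.2
        refine ⟨hpar, ?_⟩
        have hcT := (hXW c hc.1).1
        have hcA := (hXW c hc.1).2
        have := dep_par hT hA hcT hcA
        omega)]
    apply Finset.sum_congr rfl
    intro u hu
    rw [Finset.mem_filter] at hu
    congr 1
    ext c
    constructor
    · intro hc
      have hcmem := hXch u hu.1 hu.2 c hc
      have hc' := (mem_children hT hA).mp hc
      have hdp := dep_par hT hA hc'.2.1 hc'.1
      rw [hc'.2.2] at hdp
      rw [Finset.mem_filter, Finset.mem_filter]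
      exact ⟨⟨hcmem, by omega⟩, hc'.2.2⟩
    · intro hc
      rw [Finset.mem_filter, Finset.mem_filter] at hc
      exact (mem_children hT hA).mpr ⟨(hXW c hc.1.1).2, (hXW c hc.1.1).1, hc.2⟩
  have hBpar : ∀ c ∈ B, T.edist A c = d + 1 → par T A c ∈ B := by
    intro c hc hcd
    apply hclimb c hc
    intro h0
    rw [h0] at hcd
    omega
  have hCpar : ∀ c ∈ Cs, T.edist A c = d + 1 → par T A c ∈ Cs := by
    intro c hc hcd
    apply hclimbC c hc
    intro h0
    rw [h0, hdep12] at hcd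
    omega
  have degB := degside B hBW hchB hBpar
  have degC := degside Cs hCW hchC hCpar
  have degU : Even (∑ u ∈ (B ∪ Cs).filter (fun u => T.edist A u = d), G.degree u) := by
    rw [Finset.filter_union, Finset.sum_union (fildisj d), degB, degC, ← cnt d, ← cnt (d + 1)]
    exact ⟨(B.filter (fun u => T.edist A u = d)).card
      + (B.filter (fun u => T.edist A u = d + 1)).card, by ring⟩
  -- the new deficiency set
  set V' := V \ (B ∪ Cs) with hV'
  have hmemV' : ∀ {u}, u ∈ V' ↔ (u ∈ V ∧ u ∉ B ∧ u ∉ Cs) := by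
    intro u
    rw [hV', Finset.mem_sdiff, Finset.mem_union]
    tauto
  have hDef' : DefS T A V' = (Finset.range i).image (uuF T A d v) := by
    ext u
    rw [mem_DefS, Finset.mem_image]
    constructor
    · rintro ⟨huT, huV', w, hwT, hsub, hwV'⟩
      obtain ⟨huV, huB, huC⟩ := hmemV'.mp huV'
      have hwc : w ∉ V ∨ w ∈ B ∨ w ∈ Cs := by
        by_contra hcon
        push_neg at hcon
        exact hwV' (hmemV'.mpr ⟨hcon.1, hcon.2.1, hcon.2.2⟩)
      have hfin : u = uuF T A d v (T.edist A u) ∧ T.edist A u < i := by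
        rcases hwc with hw | hw | hw
        · -- u was already deficient
          have huD : u ∈ DefS T A V := mem_DefS.mpr ⟨huT, huV, w, hwT, hsub, hw⟩
          rw [hDefEq, Finset.mem_image] at huD
          obtain ⟨i'', hi'', hEq⟩ := huD
          rw [Finset.mem_range] at hi''
          have hdepu : T.edist A u = i'' := by
            rw [← hEq]; exact uuF_dep hT hA hvT hdist (by omega)
          have hlt : i'' < i := by
            by_contra hge
            push_neg at hge
            apply huB
            apply hBfull u ?_ huV
            rw [← hEq, ← hv1uu]
            exact uuF_inSub hT hA hvT hdist hge (by omega)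
          rw [hdepu, hEq]
          exact ⟨rfl, hlt⟩
        · -- w ∈ B
          rcases inSub_comparable hT hA hsub (hBsub w hw) with hc | hc
          · -- inSub u v₁
            rw [← hv1uu] at hc
            have := uuF_of_inSub hT hA hvT hdist hid hc
            refine ⟨this.1, ?_⟩
            rcases Nat.lt_or_ge (T.edist A u) i with h | h
            · exact h
            · exfalso
              apply huB
              apply hBfull u ?_ huV
              have hEqi : T.edist A u = i := by omega
              rw [hEqi] at this
              rw [this.1, hv1uu]
              exact inSub_refl hT hA hv1T
          · exact absurd (hBfull u hc huV) huB
        · -- w ∈ Cs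
          rcases inSub_comparable hT hA hsub (hCsub w hw) with hc | hc
          · -- inSub u v₂
            have huv2 : v₂ ≠ u := fun h0 => huC (h0 ▸ hv2)
            have hstep := inSub_step hT hA hc huv2
            have : inSub T A u (uuF T A d v (i - 1)) := by
              rw [← hs_uu, ← hparv2]
              exact hstep.2
            have hres := uuF_of_inSub hT hA hvT hdist (by omega) this
            exact ⟨hres.1, by omega⟩
          · exact absurd (hCfull u hc huV) huC
      exact ⟨T.edist A u, Finset.mem_range.mpr hfin.2, hfin.1.symm⟩
    · rintro ⟨i', hi', rfl⟩
      rw [Finset.mem_range] at hi'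
      have hi'd : i' ≤ d := by omega
      have huT := uuF_mem hT hA hvT hdist hi'd
      have hdepu := uuF_dep hT hA hvT hdist hi'd
      have huV : uuF T A d v i' ∈ V := by
        have : uuF T A d v i' ∈ DefS T A V := by
          rw [hDefEq, Finset.mem_image]
          exact ⟨i', Finset.mem_range.mpr (by omega), rfl⟩
        exact (mem_DefS.mp this).2.1
      have huB : uuF T A d v i' ∉ B := by
        intro h0
        have := inSub_dep_le hT hA (hBsub _ h0)
        omega
      have huC : uuF T A d v i' ∉ Cs := by
        intro h0
        have := inSub_dep_le hT hA (hCsub _ h0)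
        rw [hdep12] at this
        omega
      refine ⟨huT, hmemV'.mpr ⟨huV, huB, huC⟩, v₁, hv1T, ?_, ?_⟩
      · rw [← hv1uu]
        exact uuF_inSub hT hA hvT hdist (by omega) hid
      · intro hmem
        exact (hmemV'.mp hmem).2.1 hv1
  -- the new invariant
  have hInv' : InvP G T A d v V' i := by
    refine ⟨fun x hx => hInv.1 (Finset.mem_sdiff.mp hx).1, ?_, ?_, hi1, by omega, hDef'⟩
    · intro u huV' huT huA
      obtain ⟨huV, huB, huC⟩ := hmemV'.mp huV'
      have hpV := hInv.2.1 u huV huT huA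
      have hpB : par T A u ∉ B := by
        intro h0
        apply huB
        apply hBfull u (inSub_trans hT hA (hBsub _ h0) (inSub_of_par hT hA huT huA)) huV
      have hpC : par T A u ∉ Cs := by
        intro h0
        apply huC
        apply hCfull u (inSub_trans hT hA (hCsub _ h0) (inSub_of_par hT hA huT huA)) huV
      exact hmemV'.mpr ⟨hpV, hpB, hpC⟩
    · intro u huV'
      exact hInv.2.2.1 u (hmemV'.mp huV').1
  -- children of A removed
  have hchA : (children T A A) ∩ (B ∪ Cs) = (if i = 1 then ({v₁, v₂} : Finset ℕ) else ∅) := by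
    ext c
    rw [Finset.mem_inter, Finset.mem_union]
    constructor
    · rintro ⟨hcch, hc⟩
      rw [mem_children hT hA] at hcch
      obtain ⟨hcA, hcT, hcpar⟩ := hcch
      have hdc : T.edist A c = 1 := by
        have := dep_par hT hA hcT hcA
        rw [hcpar, edist_self] at this
        omega
      rcases hc with hc | hc
      · have hle := inSub_dep_le hT hA (hBsub c hc)
        have hEqi : i = 1 := by omega
        have : c = v₁ := inSub_eq_of_dep hT hA (hBsub c hc) (by omega)
        rw [if_pos hEqi]
        rw [this]
        exact Finset.mem_insert_self _ _
      · have hle := inSub_dep_le hT hA (hCsub c hc)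
        rw [hdep12] at hle
        have hEqi : i = 1 := by omega
        have : c = v₂ := inSub_eq_of_dep hT hA (hCsub c hc) (by omega)
        rw [if_pos hEqi]
        rw [this]
        exact Finset.mem_insert_of_mem (Finset.mem_singleton_self _)
    · intro hc
      by_cases hEqi : i = 1
      · rw [if_pos hEqi] at hc
        rw [Finset.mem_insert, Finset.mem_singleton] at hc
        have hparA : s = A := by
          rw [hs_uu, hEqi]
          exact uuF_zero hT hA hvT hdist hd
        rcases hc with rfl | rfl
        · exact ⟨(mem_children hT hA).mpr ⟨hv1A, hv1T, by rw [hparv1, hparA]⟩, Or.inl hv1⟩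
        · exact ⟨(mem_children hT hA).mpr ⟨hv2A, hv2T, by rw [hparv2, hparA]⟩, Or.inr hv2⟩
      · rw [if_neg hEqi] at hc
        exact absurd hc (Finset.notMem_empty c)
  have hchAcard : ((children T A A) ∩ (B ∪ Cs)).card = (if i = 1 then 2 else 0) := by
    rw [hchA]
    by_cases hEqi : i = 1
    · rw [if_pos hEqi, if_pos hEqi]
      rw [Finset.card_insert_of_notMem, Finset.card_singleton]
      rw [Finset.mem_singleton]
      intro h0
      exact Finset.disjoint_left.mp hdisj (h0 ▸ hv1) hv2
    · rw [if_neg hEqi, if_neg hEqi, Finset.card_empty]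
  have hBCT : ∀ u ∈ B ∪ Cs, u ∈ T.verts := by
    intro u hu
    rw [Finset.mem_union] at hu
    rcases hu with hu | hu
    exacts [(hBW u hu).1, (hCW u hu).1]
  exact ⟨i, hi1, hi_m, hInv', hBCT, cntU, degU, hchAcard⟩

end Step2

open Finset

lemma reduces_verts_mono {K H : MGraph} (h : ReducesTo K H) : H.verts ⊆ K.verts := by
  induction h with
  | refl => exact Finset.Subset.refl _
  | tail _ hstep ih =>
    refine Finset.Subset.trans ?_ ih
    obtain ⟨s, B, Cs, _, rfl⟩ := hstep
    intro x hx
    exact (Finset.mem_sdiff.mp hx).1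

def OutP (G T : MGraph) (A d : ℕ) (V : Finset ℕ) (m : ℕ) : Prop :=
  (∀ x, 1 ≤ x → Even (((T.verts.filter (fun w => T.edist A w = x)) ∩ V).card)) ∧
  Even (∑ u ∈ (T.verts.filter (fun w => T.edist A w = d)) ∩ V, G.degree u) ∧
  (m = 1 → (children T A A) ∩ V = ∅) ∧
  (2 ≤ m → ((children T A A) ∩ V).card = 2)

section MainInd

variable {G C T : MGraph} {A d v : ℕ}
variable (hG : CycleWithTreeAt G C T A)
  (hd : 1 ≤ d) (hvT : v ∈ T.verts) (hdist : T.edist A v = d)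

set_option linter.unusedSectionVars false
include hG hd hvT hdist

lemma step_main (hRed : G.Reduced) {V : Finset ℕ} {m : ℕ} (hInv : InvP G T A d v V m)
    {s : ℕ} {B Cs : Finset ℕ} (hCan : (G.induce V).Cancellation s B Cs)
    (hback : C.verts ⊆ V \ (B ∪ Cs)) :
    ∃ j, 1 ≤ j ∧ j < m ∧ InvP G T A d v (V \ (B ∪ Cs)) j ∧
      (∀ u ∈ B ∪ Cs, u ∈ T.verts) ∧
      (∀ x, Even (((B ∪ Cs).filter (fun u => T.edist A u = x)).card)) ∧
      Even (∑ u ∈ (B ∪ Cs).filter (fun u => T.edist A u = d), G.degree u) ∧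
      ((children T A A) ∩ (B ∪ Cs)).card = (if j = 1 then 2 else 0) ∧
      B ∪ Cs ⊆ V := by
  obtain ⟨e₁, e₂, v₁, v₂, hX⟩ := isCan_of_cancellation hCan
  have hBCV : B ∪ Cs ⊆ V := by
    obtain ⟨_, _, _, _, hBV, hCV, _⟩ := hX
    exact Finset.union_subset hBV hCV
  rcases nolift hG hd hvT hdist hRed hInv hX hback with h1 | h2
  · obtain ⟨j, hj1, hjm, hInv', hBCT, cnt, degU, hch⟩ :=
      step_core hG hd hvT hdist hInv hX hback h1
    exact ⟨j, hj1, hjm, hInv', hBCT, fun x => ⟨_, by rw [cnt x]; ring⟩, degU, hch, hBCV⟩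
  · have hbackC : C.verts ⊆ V \ (Cs ∪ B) := by rw [Finset.union_comm]; exact hback
    obtain ⟨j, hj1, hjm, hInv', hBCT, cnt, degU, hch⟩ :=
      step_core hG hd hvT hdist hInv hX.swap hbackC h2
    rw [Finset.union_comm Cs B] at hInv' hBCT degU hch
    refine ⟨j, hj1, hjm, hInv', hBCT, ?_, degU, hch, hBCV⟩
    intro x
    have := cnt x
    rw [Finset.union_comm Cs B] at this
    exact ⟨_, by rw [this]; ring⟩

lemma main_ind (hRed : G.Reduced) {H : MGraph} (hSame : H.SameGraph C) :
    ∀ K, ReducesTo K H → ∀ V m, K = G.induce V → InvP G T A d v V m → OutP G T A d V m := by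
  have hT := ctx_hT hG
  have hA := ctx_hA hG
  intro K hK
  induction hK using Relation.ReflTransGen.head_induction_on with
  | refl =>
    intro V m hKV hInv
    have hVC : V = C.verts := by
      have h1 : (G.induce V).verts = V := rfl
      rw [← hKV] at h1
      rw [← h1, hSame.1]
    subst hVC
    have hm1 : m = 1 := by
      by_contra hne
      have hm2 : 2 ≤ m := by
        have := hInv.2.2.2.1
        omega
      have hmem : uuF T A d v 1 ∈ DefS T A C.verts := by
        rw [hInv.2.2.2.2.2, Finset.mem_image]
        exact ⟨1, Finset.mem_range.mpr (by omega), rfl⟩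
      have h1d : (1 : ℕ) ≤ d := hd
      have huT : uuF T A d v 1 ∈ T.verts := uuF_mem hT hA hvT hdist h1d
      have hdep : T.edist A (uuF T A d v 1) = 1 := uuF_dep hT hA hvT hdist h1d
      have hne' : uuF T A d v 1 ≠ A := by
        intro h0
        rw [h0, edist_self] at hdep
        omega
      have : uuF T A d v 1 ∈ C.verts := (mem_DefS.mp hmem).2.1
      exact W_not_C hG huT hne' this
    have hempty : ∀ x, 1 ≤ x →
        (T.verts.filter (fun w => T.edist A w = x)) ∩ C.verts = ∅ := by
      intro x hx
      rw [Finset.eq_empty_iff_forall_notMem]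
      intro u hu
      rw [Finset.mem_inter, Finset.mem_filter] at hu
      have huA : u ≠ A := by
        intro h0
        rw [h0, edist_self] at hu
        omega
      exact W_not_C hG hu.1.1 huA hu.2
    have hchA : (children T A A) ∩ C.verts = ∅ := by
      rw [Finset.eq_empty_iff_forall_notMem]
      intro c hc
      rw [Finset.mem_inter, mem_children hT hA] at hc
      exact W_not_C hG hc.1.2.1 hc.1.1 hc.2
    refine ⟨?_, ?_, fun _ => hchA, fun h2 => absurd hm1 (by omega)⟩
    · intro x hx
      rw [hempty x hx]
      simp
    · rw [hempty d hd]
      simp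
  | head hstep htail ih =>
    intro V m hKV hInv
    obtain ⟨s, B, Cs, hCan, hK2⟩ := hstep
    subst hKV
    rw [show (G.induce V).verts = V from rfl] at hK2
    rw [induce_induce G V (V \ (B ∪ Cs)) Finset.sdiff_subset] at hK2
    have hback : C.verts ⊆ V \ (B ∪ Cs) := by
      have h1 := reduces_verts_mono htail
      rw [hK2] at h1
      rw [← hSame.1]
      exact h1
    obtain ⟨j, hj1, hjm, hInv', hBCT, cnt, degU, hch, hBCV⟩ :=
      step_main hG hd hvT hdist hRed hInv hCan hback
    have hOut' := ih (V \ (B ∪ Cs)) j hK2 hInv'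
    obtain ⟨o1, o2, o3, o4⟩ := hOut'
    -- partition of V
    have hpart : ∀ (S : Finset ℕ), S ∩ V = (S ∩ (V \ (B ∪ Cs))) ∪ (S ∩ (B ∪ Cs)) := by
      intro S
      rw [← Finset.inter_union_distrib_left, Finset.sdiff_union_of_subset hBCV]
    have hdisjp : ∀ (S : Finset ℕ),
        Disjoint (S ∩ (V \ (B ∪ Cs))) (S ∩ (B ∪ Cs)) := by
      intro S
      exact Finset.disjoint_of_subset_left Finset.inter_subset_right
        (Finset.disjoint_of_subset_right Finset.inter_subset_right Finset.sdiff_disjoint)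
    have hfil : ∀ x, (T.verts.filter (fun w => T.edist A w = x)) ∩ (B ∪ Cs)
        = (B ∪ Cs).filter (fun u => T.edist A u = x) := by
      intro x
      ext u
      rw [Finset.mem_inter, Finset.mem_filter, Finset.mem_filter]
      constructor
      · rintro ⟨⟨h1, h2⟩, h3⟩
        exact ⟨h3, h2⟩
      · rintro ⟨h1, h2⟩
        exact ⟨⟨hBCT u h1, h2⟩, h1⟩
    refine ⟨?_, ?_, ?_, ?_⟩
    · intro x hx
      rw [hpart, Finset.card_union_of_disjoint (hdisjp _), hfil]
      exact Even.add (o1 x hx) (cnt x)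
    · rw [hpart, Finset.sum_union (hdisjp _), hfil]
      exact Even.add o2 degU
    · intro h1
      omega
    · intro _
      rw [hpart, Finset.card_union_of_disjoint (hdisjp _)]
      by_cases hj : j = 1
      · rw [o3 hj, hch]
        rw [if_pos hj]
        simp
      · have hj2 : 2 ≤ j := by omega
        rw [o4 hj2, hch, if_neg hj]

end MainInd

open Finset

section Final

variable {G C T : MGraph} {A d v : ℕ}
variable (hG : CycleWithTreeAt G C T A)
  (hd : 1 ≤ d) (hvT : v ∈ T.verts) (hdist : T.edist A v = d)

set_option linter.unusedSectionVars false
include hG hd hvT hdist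

lemma inv0 : InvP G T A d v (V0 G A v) d := by
  have hT := ctx_hT hG
  have hA := ctx_hA hG
  have hchar := fun {u} (hu : u ∈ T.verts) => V0_T_char hG hd hvT hdist hu
  refine ⟨V0_sub_G hG hd hvT hdist, ?_, ?_, hd, le_rfl, ?_⟩
  · intro u huV huT huA
    have hpT : par T A u ∈ T.verts := par_mem hT hA huT huA
    rw [hchar hpT]
    intro hsub
    exact ((hchar huT).mp huV) (inSub_trans hT hA hsub (inSub_of_par hT hA huT huA))
  · intro u huV hsub
    exact ((hchar hsub.1).mp huV) hsub
  · ext u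
    rw [mem_DefS, Finset.mem_image]
    constructor
    · rintro ⟨huT, huV, w, hwT, hsub, hwV⟩
      have hsubvw : inSub T A v w := by
        by_contra hc
        exact hwV ((hchar hwT).mpr hc)
      have hnvu : ¬ inSub T A v u := (hchar huT).mp huV
      rcases inSub_comparable hT hA hsub hsubvw with hc | hc
      · -- inSub u v
        have hv_uu : v = uuF T A d v d := (uuF_d hT hA hvT hdist).symm
        rw [hv_uu] at hc
        have hres := uuF_of_inSub hT hA hvT hdist le_rfl hc
        have hlt : T.edist A u < d := by
          rcases Nat.lt_or_ge (T.edist A u) d with h | h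
          · exact h
          · exfalso
            have hEq : T.edist A u = d := by
              have := hres.2
              omega
            have : u = v := by
              rw [hres.1, hEq, uuF_d hT hA hvT hdist]
            rw [this] at hnvu
            exact hnvu (inSub_refl hT hA hvT)
        exact ⟨T.edist A u, Finset.mem_range.mpr hlt, hres.1.symm⟩
      · exact absurd hc hnvu
    · rintro ⟨i, hi, rfl⟩
      rw [Finset.mem_range] at hi
      have hiT := uuF_mem hT hA hvT hdist (show i ≤ d by omega)
      have hidep := uuF_dep hT hA hvT hdist (show i ≤ d by omega)
      refine ⟨hiT, ?_, v, hvT, ?_, ?_⟩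
      · rw [hchar hiT]
        intro hsub
        have := inSub_dep_le hT hA hsub
        rw [hdist, hidep] at this
        omega
      · have := uuF_inSub hT hA hvT hdist (show i ≤ d by omega) le_rfl
        rw [uuF_d hT hA hvT hdist] at this
        exact this
      · rw [hchar hvT]
        intro hc
        exact hc (inSub_refl hT hA hvT)

lemma children_dep_one {c : ℕ} (hc : c ∈ children T A A) : T.edist A c = 1 := by
  have hT := ctx_hT hG
  have hA := ctx_hA hG
  rw [mem_children hT hA] at hc
  have := dep_par hT hA hc.2.1 hc.1
  rw [hc.2.2, edist_self] at this
  omega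

lemma final_all (hRed : G.Reduced) (hTel : Telescoping G C A v) :
    (G.degree A ≤ 4 ∧ (G.degree A = 3 ↔ d = 1)) ∧
    ((∀ x, 1 ≤ x → x < d →
        Even ((T.verts.filter fun w => T.edist A w = x).card)) ∧
      Odd ((T.verts.filter fun w => T.edist A w = d).card)) ∧
    Even (∑ u ∈ (T.verts.filter fun w => T.edist A w = d).erase v,
      G.degree u) := by
  have hT := ctx_hT hG
  have hA := ctx_hA hG
  obtain ⟨hvG, hvC, H, hRedTo, hSame⟩ := hTel
  have hchar := fun {u} (hu : u ∈ T.verts) => V0_T_char hG hd hvT hdist hu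
  have hOut : OutP G T A d (V0 G A v) d := by
    refine main_ind hG hd hvT hdist hRed hSame (G.induce (V0 G A v)) ?_ (V0 G A v) d rfl
      (inv0 hG hd hvT hdist)
    rw [← component_delVert_eq hG hvG]
    exact hRedTo
  obtain ⟨o1, o2, o3, o4⟩ := hOut
  have F1 : ∀ x, 1 ≤ x → x < d →
      (T.verts.filter (fun w => T.edist A w = x)) ∩ (V0 G A v)
        = T.verts.filter (fun w => T.edist A w = x) := by
    intro x hx hxd
    apply Finset.inter_eq_left.mpr
    intro u hu
    rw [Finset.mem_filter] at hu
    rw [hchar hu.1]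
    intro hsub
    have := inSub_dep_le hT hA hsub
    rw [hdist, hu.2] at this
    omega
  have F2 : (T.verts.filter (fun w => T.edist A w = d)) ∩ (V0 G A v)
      = (T.verts.filter (fun w => T.edist A w = d)).erase v := by
    ext u
    rw [Finset.mem_inter, Finset.mem_erase, Finset.mem_filter]
    constructor
    · rintro ⟨⟨h1, h2⟩, h3⟩
      refine ⟨?_, h1, h2⟩
      intro h0
      exact ((hchar h1).mp h3) (by rw [h0]; exact inSub_refl hT hA hvT)
    · rintro ⟨h0, h1, h2⟩
      refine ⟨⟨h1, h2⟩, (hchar h1).mpr ?_⟩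
      intro hsub
      exact h0 (inSub_eq_of_dep hT hA hsub (by rw [h2, hdist]))
  have F3 : v ∈ T.verts.filter (fun w => T.edist A w = d) :=
    Finset.mem_filter.mpr ⟨hvT, hdist⟩
  refine ⟨?_, ⟨?_, ?_⟩, ?_⟩
  · -- degree of A
    rw [deg_G_A hG]
    by_cases hd1 : d = 1
    · have hchA0 : (children T A A) ∩ (V0 G A v) = ∅ := o3 hd1
      have hvch : v ∈ children T A A := by
        rw [mem_children hT hA]
        refine ⟨v_ne_A hG hd hvT hdist, hvT, ?_⟩
        have h1 : T.edist A v = 1 := by rw [hdist, hd1]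
        have hvA : v ≠ A := v_ne_A hG hd hvT hdist
        have hp := dep_par hT hA hvT hvA
        rw [h1] at hp
        exact (dep_eq_zero_iff hT hA (par_mem hT hA hvT hvA)).mp (by omega)
      have huniq : ∀ c ∈ children T A A, c = v := by
        intro c hc
        have hcd := children_dep_one hG hd hvT hdist hc
        have hcT : c ∈ T.verts := ((mem_children hT hA).mp hc).2.1
        have hcV : c ∉ V0 G A v := by
          intro hmem
          rw [Finset.eq_empty_iff_forall_notMem] at hchA0
          exact hchA0 c (Finset.mem_inter.mpr ⟨hc, hmem⟩)
        have hsub : inSub T A v c := by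
          by_contra hns
          exact hcV ((hchar hcT).mpr hns)
        exact inSub_eq_of_dep hT hA hsub (by rw [hcd, hdist, hd1])
      have : children T A A = {v} := by
        apply Finset.eq_singleton_iff_unique_mem.mpr
        exact ⟨hvch, huniq⟩
      rw [this, Finset.card_singleton]
      exact ⟨by omega, by constructor <;> intro <;> omega⟩
    · have hd2 : 2 ≤ d := by omega
      have hchAeq : (children T A A) ∩ (V0 G A v) = children T A A := by
        apply Finset.inter_eq_left.mpr
        intro c hc
        have hcd := children_dep_one hG hd hvT hdist hc
        have hcT : c ∈ T.verts := ((mem_children hT hA).mp hc).2.1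
        rw [hchar hcT]
        intro hsub
        have := inSub_dep_le hT hA hsub
        rw [hdist, hcd] at this
        omega
      have := o4 hd2
      rw [hchAeq] at this
      rw [this]
      exact ⟨by omega, by constructor <;> intro h <;> omega⟩
  · -- even levels
    intro x hx hxd
    have := o1 x hx
    rw [F1 x hx hxd] at this
    exact this
  · -- odd level d
    have := o1 d hd
    rw [F2] at this
    obtain ⟨k, hk⟩ := this
    rw [Finset.card_erase_of_mem F3] at hk
    have hpos : 1 ≤ (T.verts.filter (fun w => T.edist A w = d)).card :=
      Finset.card_pos.mpr ⟨v, F3⟩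
    exact ⟨k, by omega⟩
  · -- degree sum
    have := o2
    rw [F2] at this
    exact this

end Final

end MGraph


open MGraph in
/-- Let `G` be a reduced graph consisting of an odd cycle `C` attached to the
tree `T` at the vertex `A` and, for `x ≥ 1`, let `S_x` be the set of tree
vertices at distance `x` from `A`.  If `G` has a telescoping vertex `v ∈ S_d`
with `d ≥ 1`, then: (i) `deg A ≤ 4`, and `deg A = 3 ↔ d = 1`;
(ii) `|S_1|, …, |S_{d-1}|` are even and `|S_d|` is odd;
(iii) the total degree of the vertices of `S_d \ {v}` is even. -/
theorem telescoping_properties (G C T : MGraph) (A : ℕ) (d v : ℕ)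
    (hRed : G.Reduced) (hG : CycleWithTreeAt G C T A)
    (hd : 1 ≤ d) (hvT : v ∈ T.verts) (hdist : T.edist A v = d)
    (hTel : Telescoping G C A v) :
    (G.degree A ≤ 4 ∧ (G.degree A = 3 ↔ d = 1)) ∧
    ((∀ x, 1 ≤ x → x < d →
        Even ((T.verts.filter fun w => T.edist A w = x).card)) ∧
      Odd ((T.verts.filter fun w => T.edist A w = d).card)) ∧
    Even (∑ u ∈ (T.verts.filter fun w => T.edist A w = d).erase v,
      G.degree u) := by
  exact MGraph.final_all hG hd hvT hdist hRed hTel
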